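/- arXiv:2406.02226 — 3 statements merged into one kernel-verified Lean document; each statement's English description precedes it below -/
import Mathlib

section
/- Consider the planar system ẋ = y^{2l−1} − x^{2k+1}, ẏ = −x + m·y^{2s+1} with positive integers l, k, s satisfying 2 ≤ l ≤ 2s and with s < kl. If m ≤ 0, then the origin is an attractor; if m > 0, then the origin is a repeller. -/
open Filter Topology Set

/-- A forward solution of the system ẋ = y^{2l-1} - x^{2k+1}, ẏ = -x + m·y^{2s+1},
defined (in the forward sense) on [0,∞). -/
def IsForwardSolution (l k s : ℕ) (m : ℝ) (x y : ℝ → ℝ) : Prop :=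
  ∀ t : ℝ, 0 ≤ t →
    HasDerivWithinAt x (y t ^ (2 * l - 1) - x t ^ (2 * k + 1)) (Ici 0) t ∧
    HasDerivWithinAt y (-x t + m * y t ^ (2 * s + 1)) (Ici 0) t

/-- A backward solution of the same system, defined on (-∞,0]. -/
def IsBackwardSolution (l k s : ℕ) (m : ℝ) (x y : ℝ → ℝ) : Prop :=
  ∀ t : ℝ, t ≤ 0 →
    HasDerivWithinAt x (y t ^ (2 * l - 1) - x t ^ (2 * k + 1)) (Iic 0) t ∧
    HasDerivWithinAt y (-x t + m * y t ^ (2 * s + 1)) (Iic 0) t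

/-- The origin is an attractor: all forward solutions starting close enough to the
origin tend to the origin as t → +∞. -/
def OriginAttractor (l k s : ℕ) (m : ℝ) : Prop :=
  ∃ δ : ℝ, 0 < δ ∧ ∀ x y : ℝ → ℝ, IsForwardSolution l k s m x y →
    x 0 ^ 2 + y 0 ^ 2 < δ ^ 2 →
    Tendsto (fun t => (x t, y t)) atTop (𝓝 (0, 0))

/-- The origin is a repeller: all backward solutions starting close enough to the
origin tend to the origin as t → -∞. -/
def OriginRepeller (l k s : ℕ) (m : ℝ) : Prop :=
  ∃ δ : ℝ, 0 < δ ∧ ∀ x y : ℝ → ℝ, IsBackwardSolution l k s m x y →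
    x 0 ^ 2 + y 0 ^ 2 < δ ^ 2 →
    Tendsto (fun t => (x t, y t)) atBot (𝓝 (0, 0))



lemma young_aniso (A B p q : ℕ) (hA : 0 < A) (hB : 0 < B) (h : A * B < p * B + q * A)
    (ε : ℝ) (hε : 0 < ε) :
    ∃ r : ℝ, 0 < r ∧ r ≤ 1 ∧ ∀ u v : ℝ, 0 ≤ u → 0 ≤ v → u ≤ r → v ≤ r →
      u ^ p * v ^ q ≤ ε * (u ^ A + v ^ B) := by
  set ε' : ℝ := min ε 1 with hε'def
  have hε'pos : 0 < ε' := lt_min hε one_pos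
  have hε'le1 : ε' ≤ 1 := min_le_right _ _
  have hε'le : ε' ≤ ε := min_le_left _ _
  refine ⟨ε' ^ (A * B), pow_pos hε'pos _, pow_le_one₀ hε'pos.le hε'le1, ?_⟩
  intro u v hu hv hur hvr
  set r : ℝ := ε' ^ (A * B) with hrdef
  have hr0 : 0 ≤ r := (pow_pos hε'pos _).le
  have hr1 : r ≤ 1 := pow_le_one₀ hε'pos.le hε'le1
  have hu1 : u ≤ 1 := hur.trans hr1
  have hv1 : v ≤ 1 := hvr.trans hr1
  set M : ℝ := max (u ^ A) (v ^ B) with hMdef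
  have hM0 : 0 ≤ M := le_trans (pow_nonneg hu A) (le_max_left _ _)
  rcases eq_or_lt_of_le hM0 with hM | hMpos
  · have huA : u ^ A = 0 := le_antisymm (hM ▸ le_max_left _ _) (pow_nonneg hu A)
    have hvB : v ^ B = 0 := le_antisymm (hM ▸ le_max_right _ _) (pow_nonneg hv B)
    have hu0 : u = 0 := pow_eq_zero_iff hA.ne' |>.mp huA
    have hv0 : v = 0 := pow_eq_zero_iff hB.ne' |>.mp hvB
    have hpq : p ≠ 0 ∨ q ≠ 0 := by
      by_contra hc
      push_neg at hc
      obtain ⟨hp0, hq0⟩ := hc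
      simp [hp0, hq0] at h
    have hz : u ^ p * v ^ q = 0 := by
      rcases hpq with hp | hq
      · rw [hu0, zero_pow hp, zero_mul]
      · rw [hv0, zero_pow hq, mul_zero]
    rw [hz, hu0, hv0, zero_pow hA.ne', zero_pow hB.ne']
    simp
  · have hM1 : M ≤ 1 := max_le (pow_le_one₀ hu hu1) (pow_le_one₀ hv hv1)
    have hrA : r ^ A ≤ r := by
      calc r ^ A ≤ r ^ 1 := pow_le_pow_of_le_one hr0 hr1 hA
        _ = r := pow_one r
    have hrB : r ^ B ≤ r := by
      calc r ^ B ≤ r ^ 1 := pow_le_pow_of_le_one hr0 hr1 hB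
        _ = r := pow_one r
    have hMr : M ≤ r := max_le (le_trans (pow_le_pow_left₀ hu hur A) hrA)
      (le_trans (pow_le_pow_left₀ hv hvr B) hrB)
    have huM : u ≤ M ^ ((A : ℝ)⁻¹) := by
      calc u = (u ^ A) ^ ((A : ℝ)⁻¹) := (Real.pow_rpow_inv_natCast hu hA.ne').symm
        _ ≤ M ^ ((A : ℝ)⁻¹) := Real.rpow_le_rpow (pow_nonneg hu A) (le_max_left _ _)
            (by positivity)
    have hvM : v ≤ M ^ ((B : ℝ)⁻¹) := by
      calc v = (v ^ B) ^ ((B : ℝ)⁻¹) := (Real.pow_rpow_inv_natCast hv hB.ne').symm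
        _ ≤ M ^ ((B : ℝ)⁻¹) := Real.rpow_le_rpow (pow_nonneg hv B) (le_max_right _ _)
            (by positivity)
    have hup : u ^ p ≤ M ^ ((A : ℝ)⁻¹ * p) := by
      calc u ^ p ≤ (M ^ ((A : ℝ)⁻¹)) ^ p := pow_le_pow_left₀ hu huM p
        _ = M ^ ((A : ℝ)⁻¹ * p) := by
            rw [← Real.rpow_natCast (M ^ ((A : ℝ)⁻¹)) p, ← Real.rpow_mul hM0]
    have hvq : v ^ q ≤ M ^ ((B : ℝ)⁻¹ * q) := by
      calc v ^ q ≤ (M ^ ((B : ℝ)⁻¹)) ^ q := pow_le_pow_left₀ hv hvM q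
        _ = M ^ ((B : ℝ)⁻¹ * q) := by
            rw [← Real.rpow_natCast (M ^ ((B : ℝ)⁻¹)) q, ← Real.rpow_mul hM0]
    have hABpos : (0 : ℝ) < (A : ℝ) * B := by positivity
    have hexp : (1 : ℝ) + ((A : ℝ) * B)⁻¹ ≤ (A : ℝ)⁻¹ * p + (B : ℝ)⁻¹ * q := by
      have hcast : (A : ℝ) * B + 1 ≤ (p : ℝ) * B + (q : ℝ) * A := by
        have h1 : A * B + 1 ≤ p * B + q * A := h
        exact_mod_cast h1
      have e1 : (1 + ((A : ℝ) * B)⁻¹) * ((A : ℝ) * B) = (A : ℝ) * B + 1 := by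
        field_simp
      have e2 : ((A : ℝ)⁻¹ * p + (B : ℝ)⁻¹ * q) * ((A : ℝ) * B) = (p : ℝ) * B + (q : ℝ) * A := by
        field_simp
      exact le_of_mul_le_mul_right (by rw [e1, e2]; exact hcast) hABpos
    have hmain : u ^ p * v ^ q ≤ M ^ ((1 : ℝ) + ((A : ℝ) * B)⁻¹) := by
      calc u ^ p * v ^ q ≤ M ^ ((A : ℝ)⁻¹ * p) * M ^ ((B : ℝ)⁻¹ * q) :=
            mul_le_mul hup hvq (pow_nonneg hv q) (Real.rpow_nonneg hM0 _)
        _ = M ^ ((A : ℝ)⁻¹ * p + (B : ℝ)⁻¹ * q) := (Real.rpow_add hMpos _ _).symm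
        _ ≤ M ^ ((1 : ℝ) + ((A : ℝ) * B)⁻¹) :=
            Real.rpow_le_rpow_of_exponent_ge hMpos hM1 hexp
    have hsplit : M ^ ((1 : ℝ) + ((A : ℝ) * B)⁻¹) = M * M ^ (((A : ℝ) * B)⁻¹) := by
      rw [Real.rpow_add hMpos, Real.rpow_one]
    have hMe : M ^ (((A : ℝ) * B)⁻¹) ≤ ε' := by
      have h1 : M ^ (((A : ℝ) * B)⁻¹) ≤ r ^ (((A : ℝ) * B)⁻¹) :=
        Real.rpow_le_rpow hM0 hMr (by positivity)
      have h2 : r ^ (((A : ℝ) * B)⁻¹) = ε' := by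
        rw [hrdef]
        have : ((A * B : ℕ) : ℝ)⁻¹ = (((A : ℝ) * B))⁻¹ := by push_cast; ring_nf
        rw [← this]
        exact Real.pow_rpow_inv_natCast hε'pos.le (by positivity)
      rw [h2] at h1
      exact h1
    calc u ^ p * v ^ q ≤ M * M ^ (((A : ℝ) * B)⁻¹) := by rw [← hsplit]; exact hmain
      _ ≤ M * ε' := mul_le_mul_of_nonneg_left hMe hM0
      _ ≤ (u ^ A + v ^ B) * ε := by
          apply mul_le_mul (max_le (le_add_of_nonneg_right (pow_nonneg hv B))
            (le_add_of_nonneg_left (pow_nonneg hu A))) hε'le hε'pos.le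
          positivity
      _ = ε * (u ^ A + v ^ B) := mul_comm _ _


lemma young_pure (A p : ℕ) (h : A < p) (ε : ℝ) (hε : 0 < ε) :
    ∃ r : ℝ, 0 < r ∧ r ≤ 1 ∧ ∀ u : ℝ, 0 ≤ u → u ≤ r → u ^ p ≤ ε * u ^ A := by
  refine ⟨min ε 1, lt_min hε one_pos, min_le_right _ _, fun u hu hur => ?_⟩
  have h1 : u ^ p = u ^ (p - A) * u ^ A := by rw [← pow_add]; congr 1; omega
  rw [h1]
  apply mul_le_mul_of_nonneg_right _ (pow_nonneg hu A)
  calc u ^ (p - A) ≤ u ^ 1 := pow_le_pow_of_le_one hu (hur.trans (min_le_right _ _)) (by omega)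
    _ = u := pow_one u
    _ ≤ min ε 1 := hur
    _ ≤ ε := min_le_left _ _

lemma even_pow_abs (u : ℝ) (n : ℕ) : |u| ^ (2 * n) = u ^ (2 * n) := by
  rw [pow_mul, pow_mul, sq_abs]

lemma Npow_le (u v : ℝ) (hu : |u| ≤ 1) (hv : |v| ≤ 1) (L A B γ : ℕ)
    (h1 : A ≤ 2 * γ) (h2 : B ≤ 2 * L * γ) :
    (u ^ 2 + v ^ (2 * L)) ^ γ ≤ 2 ^ γ * (|u| ^ A + |v| ^ B) := by
  have hu0 : (0:ℝ) ≤ |u| := abs_nonneg u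
  have hv0 : (0:ℝ) ≤ |v| := abs_nonneg v
  have e1 : u ^ 2 = |u| ^ 2 := by rw [show (2:ℕ) = 2*1 by omega, even_pow_abs]
  have e2 : v ^ (2*L) = |v| ^ (2*L) := (even_pow_abs v L).symm
  rw [e1, e2]
  set a := |u| ^ 2 with ha
  set b := |v| ^ (2*L) with hb
  have ha0 : 0 ≤ a := pow_nonneg hu0 _
  have hb0 : 0 ≤ b := pow_nonneg hv0 _
  have hmax : a + b ≤ 2 * max a b := by
    rcases le_total a b with hab | hab
    · calc a + b ≤ b + b := by linarith
        _ = 2 * b := by ring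
        _ ≤ 2 * max a b := by have := le_max_right a b; linarith
    · calc a + b ≤ a + a := by linarith
        _ = 2 * a := by ring
        _ ≤ 2 * max a b := by have := le_max_left a b; linarith
  calc (a + b) ^ γ ≤ (2 * max a b) ^ γ :=
        pow_le_pow_left₀ (by positivity) hmax γ
    _ = 2 ^ γ * (max a b) ^ γ := mul_pow 2 _ γ
    _ ≤ 2 ^ γ * (|u| ^ A + |v| ^ B) := by
        apply mul_le_mul_of_nonneg_left _ (by positivity)
        have hmax0 : 0 ≤ max a b := le_trans ha0 (le_max_left a b)
        rcases max_choice a b with hc | hc <;> rw [hc]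
        · -- a^γ = |u|^(2γ) ≤ |u|^A
          calc a ^ γ = |u| ^ (2 * γ) := by rw [ha, ← pow_mul]
            _ ≤ |u| ^ A := pow_le_pow_of_le_one hu0 hu h1
            _ ≤ |u| ^ A + |v| ^ B := le_add_of_nonneg_right (pow_nonneg hv0 _)
        · calc b ^ γ = |v| ^ (2 * L * γ) := by rw [hb, ← pow_mul]
            _ ≤ |v| ^ B := pow_le_pow_of_le_one hv0 hv h2
            _ ≤ |u| ^ A + |v| ^ B := le_add_of_nonneg_left (pow_nonneg hu0 _)


lemma flow_main (x y w wd : ℝ → ℝ) (L γ : ℕ) (r κ c1 : ℝ)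
    (hγ : 1 ≤ γ) (hr : 0 < r) (hκ : 0 < κ) (hc1 : 0 < c1) (hc1' : c1 ≤ 1)
    (hxc : ContinuousOn x (Ici 0)) (hyc : ContinuousOn y (Ici 0))
    (hw : ∀ t, 0 ≤ t → HasDerivWithinAt w (wd t) (Ici 0) t)
    (hlow : ∀ t, 0 ≤ t → x t ^ 2 + y t ^ (2*L) ≤ r → c1 * (x t ^ 2 + y t ^ (2*L)) ≤ w t)
    (hup : ∀ t, 0 ≤ t → x t ^ 2 + y t ^ (2*L) ≤ r → w t ≤ x t ^ 2 + y t ^ (2*L))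
    (hdec : ∀ t, 0 ≤ t → x t ^ 2 + y t ^ (2*L) ≤ r → wd t ≤ -κ * w t ^ γ)
    (hinit : x 0 ^ 2 + y 0 ^ (2*L) ≤ c1 * r / 2) :
    Tendsto (fun t => x t ^ 2 + y t ^ (2*L)) atTop (𝓝 0) := by
  set N : ℝ → ℝ := fun t => x t ^ 2 + y t ^ (2*L) with hNdef
  have hN0 : ∀ t, 0 ≤ N t := by
    intro t
    have : 0 ≤ y t ^ (2*L) := by rw [pow_mul]; positivity
    have h2 : 0 ≤ x t ^ 2 := sq_nonneg _
    simp only [hNdef]; linarith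
  have hNc : ContinuousOn N (Ici 0) := (hxc.pow 2).add (hyc.pow (2*L))
  have hwc : ContinuousOn w (Ici 0) := fun t ht => (hw t ht).continuousWithinAt
  -- Part 1 : N stays ≤ r for all t ≥ 0
  have hNr : ∀ t, 0 ≤ t → N t ≤ r := by
    by_contra hcon
    push_neg at hcon
    obtain ⟨t₀, ht₀0, ht₀⟩ := hcon
    set S : Set ℝ := {t | 0 ≤ t ∧ r < N t} with hSdef
    have hSne : S.Nonempty := ⟨t₀, ht₀0, ht₀⟩
    have hSbd : BddBelow S := ⟨0, fun t ht => ht.1⟩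
    set t₁ : ℝ := sInf S with ht₁def
    have ht₁0 : 0 ≤ t₁ := le_csInf hSne (fun t ht => ht.1)
    have ht₁cl : t₁ ∈ closure S := csInf_mem_closure hSne hSbd
    -- N t₁ ≥ r
    have hNt₁ge : r ≤ N t₁ := by
      have hcw : ContinuousWithinAt N S t₁ :=
        (hNc.continuousWithinAt (mem_Ici.mpr ht₁0)).mono (fun t ht => ht.1)
      have hne : (𝓝[S] t₁).NeBot := mem_closure_iff_nhdsWithin_neBot.mp ht₁cl
      exact ge_of_tendsto hcw (eventually_mem_nhdsWithin.mono (fun t ht => ht.2.le))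
    -- N ≤ r on [0, t₁)
    have hNlt : ∀ t, 0 ≤ t → t < t₁ → N t ≤ r := by
      intro t ht htlt
      by_contra hc
      push_neg at hc
      exact absurd (csInf_le hSbd ⟨ht, hc⟩) (not_le.mpr htlt)
    -- t₁ > 0
    have ht₁pos : 0 < t₁ := by
      rcases eq_or_lt_of_le ht₁0 with he | h
      · exfalso
        have : N t₁ ≤ c1 * r / 2 := by rw [← he]; exact hinit
        have hc1r : c1 * r ≤ r := mul_le_of_le_one_left hr.le hc1'
        have h2 : r ≤ c1 * r / 2 := le_trans hNt₁ge this
        linarith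
      · exact h
    -- N t₁ ≤ r by left continuity
    have hNt₁le : N t₁ ≤ r := by
      have hcw : ContinuousWithinAt N (Ico 0 t₁) t₁ :=
        (hNc.continuousWithinAt (mem_Ici.mpr ht₁0)).mono (fun t ht => ht.1)
      have hmem : t₁ ∈ closure (Ico 0 t₁) := by
        rw [closure_Ico (ne_of_lt ht₁pos)]
        exact ⟨ht₁0, le_rfl⟩
      have hne : (𝓝[Ico 0 t₁] t₁).NeBot := mem_closure_iff_nhdsWithin_neBot.mp hmem
      exact le_of_tendsto hcw (eventually_mem_nhdsWithin.mono
        (fun t ht => hNlt t ht.1 ht.2))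
    -- now N ≤ r on all of [0, t₁]
    have hNIcc : ∀ t ∈ Icc (0:ℝ) t₁, N t ≤ r := by
      intro t ⟨h1, h2⟩
      rcases eq_or_lt_of_le h2 with he | hlt
      · rw [he]; exact hNt₁le
      · exact hNlt t h1 hlt
    -- w is antitone on [0, t₁]
    have hanti : AntitoneOn w (Icc 0 t₁) := by
      apply antitoneOn_of_deriv_nonpos (convex_Icc 0 t₁)
        (hwc.mono (fun t ht => ht.1))
      · intro t ht
        rw [interior_Icc] at ht
        exact (((hw t ht.1.le).hasDerivAt (Ici_mem_nhds ht.1)).differentiableAt).differentiableWithinAt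
      · intro t ht
        rw [interior_Icc] at ht
        have hda := (hw t ht.1.le).hasDerivAt (Ici_mem_nhds ht.1)
        rw [hda.deriv]
        have hNt : N t ≤ r := hNIcc t ⟨ht.1.le, ht.2.le⟩
        have hwnn : 0 ≤ w t := le_trans (mul_nonneg hc1.le (hN0 t)) (hlow t ht.1.le hNt)
        have := hdec t ht.1.le hNt
        nlinarith [pow_nonneg hwnn γ]
    have hW0 : w 0 ≤ c1 * r / 2 := le_trans (hup 0 le_rfl (by nlinarith)) hinit
    have hWt₁ : w t₁ ≤ c1 * r / 2 :=
      le_trans (hanti (left_mem_Icc.mpr ht₁0) (right_mem_Icc.mpr ht₁0) ht₁0) hW0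
    have hlow₁ : c1 * N t₁ ≤ w t₁ := hlow t₁ ht₁0 hNt₁le
    nlinarith
  -- derivative bound holds globally, and w antitone on Ici 0
  have hwnn : ∀ t, 0 ≤ t → 0 ≤ w t := fun t ht =>
    le_trans (mul_nonneg hc1.le (hN0 t)) (hlow t ht (hNr t ht))
  have hantiI : AntitoneOn w (Ici 0) := by
    apply antitoneOn_of_deriv_nonpos (convex_Ici 0) hwc
    · intro t ht
      rw [interior_Ici] at ht
      exact (((hw t ht.le).hasDerivAt (Ici_mem_nhds ht)).differentiableAt).differentiableWithinAt
    · intro t ht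
      rw [interior_Ici] at ht
      have hda := (hw t ht.le).hasDerivAt (Ici_mem_nhds ht)
      rw [hda.deriv]
      have := hdec t ht.le (hNr t ht.le)
      nlinarith [pow_nonneg (hwnn t ht.le) γ]
  -- Part 2: convergence
  rw [Metric.tendsto_atTop]
  intro ε hε
  set μ : ℝ := c1 * min ε r / 2 with hμdef
  have hμpos : 0 < μ := by
    have := lt_min hε hr
    positivity
  -- find T with w T ≤ μ
  have hexT : ∃ T, 0 ≤ T ∧ w T ≤ μ := by
    by_contra hc
    push_neg at hc
    set C : ℝ := κ * μ ^ γ with hCdef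
    have hCpos : 0 < C := by positivity
    set g : ℝ → ℝ := fun t => w t + C * t with hgdef
    have hganti : AntitoneOn g (Ici 0) := by
      apply antitoneOn_of_deriv_nonpos (convex_Ici 0)
        (hwc.add (continuous_const.mul continuous_id).continuousOn)
      · intro t ht
        rw [interior_Ici] at ht
        exact ((((hw t ht.le).hasDerivAt (Ici_mem_nhds ht)).add
          (HasDerivAt.const_mul C (hasDerivAt_id t))).differentiableAt).differentiableWithinAt
      · intro t ht
        rw [interior_Ici] at ht
        have hda := ((hw t ht.le).hasDerivAt (Ici_mem_nhds ht)).add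
          (HasDerivAt.const_mul C (hasDerivAt_id t))
        rw [show deriv (w + (fun x => κ * μ ^ γ) * id) t = wd t + C * 1 from hda.deriv]
        have h1 := hdec t ht.le (hNr t ht.le)
        have h2 : μ ^ γ ≤ w t ^ γ := pow_le_pow_left₀ hμpos.le (hc t ht.le).le γ
        have : wd t ≤ -C := by
          calc wd t ≤ -κ * w t ^ γ := h1
            _ ≤ -κ * μ ^ γ := by nlinarith
            _ = -C := by rw [hCdef]; ring
        simp only [mul_one]
        linarith
    set T : ℝ := (w 0 + 1) / C with hTdef
    have hTpos : 0 < T := div_pos (by linarith [hwnn 0 le_rfl]) hCpos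
    have := hganti (mem_Ici.mpr le_rfl) (mem_Ici.mpr hTpos.le) hTpos.le
    simp only [hgdef, mul_zero, add_zero] at this
    have hwT : w T ≤ w 0 - C * T := by linarith
    have hCT : C * T = w 0 + 1 := by
      rw [hTdef]; field_simp
    have : w T ≤ -1 := by rw [hCT] at hwT; linarith
    have := hwnn T hTpos.le
    linarith
  obtain ⟨T, hT0, hwT⟩ := hexT
  refine ⟨T, fun t ht => ?_⟩
  have ht0 : 0 ≤ t := le_trans hT0 ht
  have hwt : w t ≤ μ := le_trans (hantiI (mem_Ici.mpr hT0) (mem_Ici.mpr ht0) ht) hwT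
  have hNt : c1 * N t ≤ w t := hlow t ht0 (hNr t ht0)
  have hNle : N t ≤ min ε r / 2 := by
    have h1 : c1 * N t ≤ c1 * min ε r / 2 := le_trans hNt hwt
    have := hN0 t
    nlinarith
  have : N t < ε := lt_of_le_of_lt hNle (by
    have h1 : min ε r ≤ ε := min_le_left _ _
    linarith)
  rw [Real.dist_eq, sub_zero, abs_of_nonneg (hN0 t)]
  exact this
lemma ineq1 (l k s : ℕ) (hl : 2 ≤ l) (hk : 1 ≤ k) (hs : 1 ≤ s) (hls : l ≤ 2 * s)
    (m : ℝ) (hm : m ≤ 0) :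
    ∃ r ρ : ℝ, 0 < r ∧ r ≤ 1 ∧ 0 < ρ ∧
      ∀ u v : ℝ, |u| ≤ r → |v| ≤ r →
        u * (v ^ (2 * l - 1) - u ^ (2 * k + 1))
          + v ^ (2 * l - 1) * (-u + m * v ^ (2 * s + 1))
          + (-(1 / (8 * (l : ℝ)))) * ((v ^ (2 * l - 1) - u ^ (2 * k + 1)) * v ^ (2 * (k * l) + 3)
              + ((2 * (k * l) + 3 : ℕ) : ℝ) * u * v ^ (2 * (k * l) + 2)
                * (-u + m * v ^ (2 * s + 1)))
        ≤ -ρ * (u ^ (2 * k + 2) + v ^ (2 * l + 2 * (k * l) + 2)) := by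
  have hlpos : (0:ℝ) < (l:ℝ) := by exact_mod_cast Nat.lt_of_lt_of_le Nat.zero_lt_two hl
  set η : ℝ := 1 / (8 * (l:ℝ)) with hηdef
  have hηpos : 0 < η := by positivity
  have hηle : η ≤ 1 := by
    rw [hηdef, div_le_one (by positivity)]
    have h2 : (2:ℝ) ≤ (l:ℝ) := by exact_mod_cast hl
    linarith
  set A : ℕ := 2 * k + 2 with hA
  set B : ℕ := 2 * l + 2 * (k * l) + 2 with hB
  set b : ℕ := 2 * (k * l) + 3 with hb
  have hApos : 0 < A := by omega
  have hBpos : 0 < B := by omega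
  have hKl : l ≤ k * l := Nat.le_mul_of_pos_left l hk
  have hKs : k * l ≤ 2 * (k * s) := by
    have h1 : k * l ≤ k * (2 * s) := Nat.mul_le_mul_left k hls
    have h2 : k * (2 * s) = 2 * (k * s) := by ring
    omega
  -- Young condition (i) : (p,q) = (2k+1, b)
  have c2 : A * B < (2 * k + 1) * B + b * A := by
    have e1 : A * B = (2 * k + 1) * B + B := by rw [hA]; ring
    have e2 : b * A = 4 * (k * (k * l)) + 6 * k + 4 * (k * l) + 6 := by rw [hb, hA]; ring
    have e3 : B = 2 * l + 2 * (k * l) + 2 := hB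
    have h4 : (0:ℕ) ≤ k * (k * l) := Nat.zero_le _
    omega
  -- Young condition (ii) : (p,q) = (2, b-1) with b-1 = 2(kl)+2
  have c3 : A * B < 2 * B + (2 * (k * l) + 2) * A := by
    have e1 : 2 * B + (2 * (k * l) + 2) * A = A * B + 4 := by rw [hA, hB]; ring
    omega
  -- Young condition (iii) : (p,q) = (1, 2s+b)
  have c4 : A * B < 1 * B + (2 * s + b) * A := by
    have e1 : (2 * s + b) * A = 4 * (k * s) + 4 * s + 4 * (k * (k * l)) + 4 * (k * l)
        + 6 * k + 6 := by rw [hb, hA]; ring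
    have e2 : A * B = 4 * (k * l) + 4 * l + 4 * (k * (k * l)) + 4 * (k * l) + 4 * k + 4 := by
      rw [hA, hB]; ring
    have e3 : 2 * l ≤ 4 * s := by omega
    have e4 : B = 2 * l + 2 * (k * l) + 2 := hB
    omega
  obtain ⟨r2, hr2pos, hr2le, hY2⟩ := young_aniso A B (2 * k + 1) b hApos hBpos c2 (1/6) (by norm_num)
  obtain ⟨r3, hr3pos, hr3le, hY3⟩ := young_aniso A B 2 (2 * (k * l) + 2) hApos hBpos c3
    (1 / (6 * (b : ℝ))) (by positivity)
  obtain ⟨r4, hr4pos, hr4le, hY4⟩ := young_aniso A B 1 (2 * s + b) hApos hBpos c4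
    (1 / (6 * (b : ℝ) * (|m| + 1))) (by positivity)
  refine ⟨min r2 (min r3 r4), η / 2, lt_min hr2pos (lt_min hr3pos hr4pos),
    le_trans (min_le_left _ _) hr2le, by positivity, ?_⟩
  intro u v hu hv
  have hu2 : |u| ≤ r2 := le_trans hu (min_le_left _ _)
  have hu3 : |u| ≤ r3 := le_trans hu (le_trans (min_le_right _ _) (min_le_left _ _))
  have hu4 : |u| ≤ r4 := le_trans hu (le_trans (min_le_right _ _) (min_le_right _ _))
  have hv2 : |v| ≤ r2 := le_trans hv (min_le_left _ _)
  have hv3 : |v| ≤ r3 := le_trans hv (le_trans (min_le_right _ _) (min_le_left _ _))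
  have hv4 : |v| ≤ r4 := le_trans hv (le_trans (min_le_right _ _) (min_le_right _ _))
  -- the expansion identity
  obtain ⟨l1, rfl⟩ := Nat.exists_eq_add_of_le hl
  have key : u * (v ^ (2 * (2 + l1) - 1) - u ^ (2 * k + 1))
      + v ^ (2 * (2 + l1) - 1) * (-u + m * v ^ (2 * s + 1))
      + (-η) * ((v ^ (2 * (2 + l1) - 1) - u ^ (2 * k + 1)) * v ^ b
          + ((b : ℕ) : ℝ) * u * v ^ (2 * (k * (2 + l1)) + 2) * (-u + m * v ^ (2 * s + 1)))
      = -(u ^ A) - η * v ^ B + m * v ^ (2 * ((2 + l1) + s))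
        + η * (u ^ (2 * k + 1) * v ^ b)
        + η * ((b : ℕ) : ℝ) * (u ^ 2 * v ^ (2 * (k * (2 + l1)) + 2))
        - η * m * ((b : ℕ) : ℝ) * (u * v ^ (2 * s + b)) := by
    have e1 : 2 * (2 + l1) - 1 = 2 * l1 + 3 := by omega
    have e2 : A = 2 * k + 2 := hA
    have e3 : B = 2 * (2 + l1) + 2 * (k * (2 + l1)) + 2 := hB
    have e4 : b = 2 * (k * (2 + l1)) + 3 := hb
    rw [e1, e2, e3, e4]
    push_cast
    ring
  rw [key]
  -- now bound the four remainder terms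
  have habs2 : u ^ (2 * k + 1) * v ^ b ≤ |u| ^ (2 * k + 1) * |v| ^ b := by
    calc u ^ (2 * k + 1) * v ^ b ≤ |u ^ (2 * k + 1) * v ^ b| := le_abs_self _
      _ = |u| ^ (2 * k + 1) * |v| ^ b := by rw [abs_mul, abs_pow, abs_pow]
  have habs3 : u ^ 2 * v ^ (2 * (k * (2 + l1)) + 2)
      = |u| ^ 2 * |v| ^ (2 * (k * (2 + l1)) + 2) := by
    rw [show (2:ℕ) = 2 * 1 by omega, even_pow_abs,
      show 2 * (k * (2 + l1)) + 2 = 2 * (k * (2 + l1) + 1) by ring, even_pow_abs,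
      ← show 2 * (k * (2 + l1)) + 2 = 2 * (k * (2 + l1) + 1) by ring]
  have habs4 : u * v ^ (2 * s + b) ≤ |u| * |v| ^ (2 * s + b) := by
    calc u * v ^ (2 * s + b) ≤ |u * v ^ (2 * s + b)| := le_abs_self _
      _ = |u| * |v| ^ (2 * s + b) := by rw [abs_mul, abs_pow]
  have hevenA : |u| ^ A = u ^ A := by
    rw [show A = 2 * (k + 1) by omega]; exact even_pow_abs u (k+1)
  have hevenB : |v| ^ B = v ^ B := by
    rw [show B = 2 * ((2 + l1) + k * (2 + l1) + 1) by rw [hB]; ring]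
    exact even_pow_abs v _
  have hY2' := hY2 |u| |v| (abs_nonneg u) (abs_nonneg v) hu2 hv2
  have hY3' := hY3 |u| |v| (abs_nonneg u) (abs_nonneg v) hu3 hv3
  have hY4' := hY4 |u| |v| (abs_nonneg u) (abs_nonneg v) hu4 hv4
  rw [hevenA, hevenB] at hY2' hY3' hY4'
  rw [pow_one] at hY4'
  -- T1 ≤ 0
  have hT1 : m * v ^ (2 * ((2 + l1) + s)) ≤ 0 := by
    apply mul_nonpos_of_nonpos_of_nonneg hm
    rw [pow_mul]; positivity
  have hbpos : (0:ℝ) < ((b : ℕ) : ℝ) := by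
    have : 0 < b := by omega
    exact_mod_cast this
  have hmabs : -m ≤ |m| := neg_le_abs m
  have hm1 : |m| ≤ |m| + 1 := by linarith
  -- T2
  have hT2 : η * (u ^ (2 * k + 1) * v ^ b) ≤ η * (1/6) * (u ^ A + v ^ B) := by
    have := le_trans habs2 hY2'
    calc η * (u ^ (2 * k + 1) * v ^ b) ≤ η * (1/6 * (u ^ A + v ^ B)) :=
          mul_le_mul_of_nonneg_left this hηpos.le
      _ = η * (1/6) * (u ^ A + v ^ B) := by ring
  -- T3
  have hT3 : η * ((b : ℕ) : ℝ) * (u ^ 2 * v ^ (2 * (k * (2 + l1)) + 2))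
      ≤ η * (1/6) * (u ^ A + v ^ B) := by
    rw [habs3]
    calc η * ((b : ℕ) : ℝ) * (|u| ^ 2 * |v| ^ (2 * (k * (2 + l1)) + 2))
        ≤ η * ((b : ℕ) : ℝ) * (1 / (6 * (b : ℝ)) * (u ^ A + v ^ B)) := by
          apply mul_le_mul_of_nonneg_left _ (by positivity)
          have e : (2 * (k * l1) + 4 * k + 2 : ℕ) = 2 * (k * (2 + l1)) + 2 := by ring
          exact hY3'
      _ = η * (1/6) * (u ^ A + v ^ B) := by
          field_simp
  -- T4
  have hT4 : - (η * m * ((b : ℕ) : ℝ) * (u * v ^ (2 * s + b)))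
      ≤ η * (1/6) * (u ^ A + v ^ B) := by
    have h1 : -(η * m * ((b : ℕ) : ℝ) * (u * v ^ (2 * s + b)))
        ≤ η * ((b : ℕ) : ℝ) * (|m| * (|u| * |v| ^ (2 * s + b))) := by
      have e1 : -(η * m * ((b : ℕ) : ℝ) * (u * v ^ (2 * s + b)))
          = η * ((b : ℕ) : ℝ) * ((-m) * (u * v ^ (2 * s + b))) := by ring
      rw [e1]
      apply mul_le_mul_of_nonneg_left _ (by positivity)
      calc (-m) * (u * v ^ (2 * s + b)) ≤ |(-m) * (u * v ^ (2 * s + b))| := le_abs_self _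
        _ = |m| * (|u| * |v| ^ (2 * s + b)) := by
            rw [abs_mul, abs_neg, abs_mul, abs_pow]
    have h2 : |m| * (|u| * |v| ^ (2 * s + b))
        ≤ (|m| + 1) * (1 / (6 * (b : ℝ) * (|m| + 1)) * (u ^ A + v ^ B)) := by
      apply mul_le_mul hm1 hY4' (by positivity) (by positivity)
    have h3 : η * ((b : ℕ) : ℝ) * ((|m| + 1) * (1 / (6 * (b : ℝ) * (|m| + 1)) * (u ^ A + v ^ B)))
        = η * (1/6) * (u ^ A + v ^ B) := by
      have hbne : ((b : ℕ) : ℝ) ≠ 0 := ne_of_gt hbpos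
      have hmne : (|m| + 1) ≠ 0 := by positivity
      field_simp
    calc -(η * m * ((b : ℕ) : ℝ) * (u * v ^ (2 * s + b)))
        ≤ η * ((b : ℕ) : ℝ) * (|m| * (|u| * |v| ^ (2 * s + b))) := h1
      _ ≤ η * ((b : ℕ) : ℝ) * ((|m| + 1) * (1 / (6 * (b : ℝ) * (|m| + 1)) * (u ^ A + v ^ B))) :=
          mul_le_mul_of_nonneg_left h2 (by positivity)
      _ = η * (1/6) * (u ^ A + v ^ B) := h3
  -- combine
  have hpowA : (0:ℝ) ≤ u ^ A := by
    rw [show A = 2 * (k + 1) by omega, pow_mul]; positivity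
  have hpowB : (0:ℝ) ≤ v ^ B := by
    rw [show B = 2 * ((2 + l1) + k * (2 + l1) + 1) by rw [hB]; ring, pow_mul]; positivity
  have hsum : (0:ℝ) ≤ u ^ A + v ^ B := by linarith
  have hfinal : -(u ^ A) - η * v ^ B + 3 * (η * (1/6) * (u ^ A + v ^ B))
      ≤ -(η / 2) * (u ^ A + v ^ B) := by
    have h1 : η * u ^ A ≤ u ^ A := mul_le_of_le_one_left hpowA hηle
    linarith
  linarith [hT1, hT2, hT3, hT4]
lemma ineq2 (l k s : ℕ) (hl : 2 ≤ l) (hk : 1 ≤ k) (hs : 1 ≤ s) (hls : l ≤ 2 * s)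
    (hskl : s < k * l) (m : ℝ) (hm : 0 < m) :
    ∃ r ρ : ℝ, 0 < r ∧ r ≤ 1 ∧ 0 < ρ ∧
      ∀ u v : ℝ, |u| ≤ r → |v| ≤ r →
        u * (u ^ (2 * k + 1) - v ^ (2 * l - 1))
          + v ^ (2 * l - 1) * (u - m * v ^ (2 * s + 1))
          + (-2 : ℝ) * (((2 * k + 1 : ℕ) : ℝ) * u ^ (2 * k) * (u ^ (2 * k + 1) - v ^ (2 * l - 1)) * v
              + u ^ (2 * k + 1) * (u - m * v ^ (2 * s + 1)))
        ≤ -ρ * (u ^ (2 * k + 2) + v ^ (2 * l + 2 * s)) := by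
  set A : ℕ := 2 * k + 2 with hA
  set B : ℕ := 2 * l + 2 * s with hB
  have hApos : 0 < A := by omega
  have hBpos : 0 < B := by omega
  set μ : ℝ := min 1 m with hμdef
  have hμpos : 0 < μ := lt_min one_pos hm
  have hμ1 : μ ≤ 1 := min_le_left _ _
  have hμm : μ ≤ m := min_le_right _ _
  -- Young conditions
  have d1 : A * B < 2 * k * B + 2 * l * A := by
    have e1 : A * B = 4 * (k * l) + 4 * (k * s) + 4 * l + 4 * s := by rw [hA, hB]; ring
    have e2 : 2 * k * B + 2 * l * A = 4 * (k * l) + 4 * (k * s) + 4 * (k * l) + 4 * l := by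
      rw [hA, hB]; ring
    omega
  have d2 : A * B < (4 * k + 1) * B + 1 * A := by
    have e1 : A * B = (2 * k + 2) * B := by rw [hA]
    have h1 : (2 * k + 2) * B ≤ (4 * k + 1) * B := Nat.mul_le_mul_right B (by omega)
    omega
  have d3 : A * B < (2 * k + 1) * B + (2 * s + 1) * A := by
    have e1 : A * B = (2 * k + 1) * B + B := by rw [hA]; ring
    have e2 : (2 * s + 1) * A = 4 * (k * s) + 4 * s + 2 * k + 2 := by rw [hA]; ring
    have h1 : s ≤ 2 * (k * s) := by
      have := Nat.le_mul_of_pos_left s hk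
      omega
    omega
  obtain ⟨r1, hr1pos, hr1le, hY1⟩ := young_aniso A B (2 * k) (2 * l) hApos hBpos d1
    (μ / (6 * (2 * ((2 * k + 1 : ℕ) : ℝ)))) (by positivity)
  obtain ⟨r2, hr2pos, hr2le, hY2⟩ := young_aniso A B (4 * k + 1) 1 hApos hBpos d2
    (μ / (6 * (2 * ((2 * k + 1 : ℕ) : ℝ)))) (by positivity)
  obtain ⟨r3, hr3pos, hr3le, hY3⟩ := young_aniso A B (2 * k + 1) (2 * s + 1) hApos hBpos d3
    (μ / (6 * (2 * m))) (by positivity)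
  refine ⟨min r1 (min r2 r3), μ / 2, lt_min hr1pos (lt_min hr2pos hr3pos),
    le_trans (min_le_left _ _) hr1le, by positivity, ?_⟩
  intro u v hu hv
  have hu1 : |u| ≤ r1 := le_trans hu (min_le_left _ _)
  have hu2 : |u| ≤ r2 := le_trans hu (le_trans (min_le_right _ _) (min_le_left _ _))
  have hu3 : |u| ≤ r3 := le_trans hu (le_trans (min_le_right _ _) (min_le_right _ _))
  have hv1 : |v| ≤ r1 := le_trans hv (min_le_left _ _)
  have hv2 : |v| ≤ r2 := le_trans hv (le_trans (min_le_right _ _) (min_le_left _ _))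
  have hv3 : |v| ≤ r3 := le_trans hv (le_trans (min_le_right _ _) (min_le_right _ _))
  obtain ⟨l1, rfl⟩ := Nat.exists_eq_add_of_le hl
  have key : u * (u ^ (2 * k + 1) - v ^ (2 * (2 + l1) - 1))
      + v ^ (2 * (2 + l1) - 1) * (u - m * v ^ (2 * s + 1))
      + (-2 : ℝ) * (((2 * k + 1 : ℕ) : ℝ) * u ^ (2 * k)
            * (u ^ (2 * k + 1) - v ^ (2 * (2 + l1) - 1)) * v
          + u ^ (2 * k + 1) * (u - m * v ^ (2 * s + 1)))
      = -(u ^ A) - m * v ^ B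
        + 2 * ((2 * k + 1 : ℕ) : ℝ) * (u ^ (2 * k) * v ^ (2 * (2 + l1)))
        - 2 * ((2 * k + 1 : ℕ) : ℝ) * (u ^ (4 * k + 1) * v)
        + 2 * m * (u ^ (2 * k + 1) * v ^ (2 * s + 1)) := by
    have e1 : 2 * (2 + l1) - 1 = 2 * l1 + 3 := by omega
    have e2 : A = 2 * k + 2 := hA
    have e3 : B = 2 * (2 + l1) + 2 * s := hB
    rw [e1, e2, e3]
    push_cast
    ring
  rw [key]
  have hevenA : |u| ^ A = u ^ A := by
    rw [show A = 2 * (k + 1) by omega]; exact even_pow_abs u (k+1)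
  have hevenB : |v| ^ B = v ^ B := by
    rw [show B = 2 * ((2 + l1) + s) by rw [hB]; ring]; exact even_pow_abs v _
  have hY1' := hY1 |u| |v| (abs_nonneg u) (abs_nonneg v) hu1 hv1
  have hY2' := hY2 |u| |v| (abs_nonneg u) (abs_nonneg v) hu2 hv2
  have hY3' := hY3 |u| |v| (abs_nonneg u) (abs_nonneg v) hu3 hv3
  rw [hevenA, hevenB] at hY1' hY2' hY3'
  rw [pow_one] at hY2'
  have hc : (0:ℝ) < ((2 * k + 1 : ℕ) : ℝ) := by
    have : 0 < 2 * k + 1 := by omega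
    exact_mod_cast this
  -- bound bad term 1
  have hb1 : 2 * ((2 * k + 1 : ℕ) : ℝ) * (u ^ (2 * k) * v ^ (2 * (2 + l1)))
      ≤ (μ / 6) * (u ^ A + v ^ B) := by
    have habs : u ^ (2 * k) * v ^ (2 * (2 + l1)) = |u| ^ (2 * k) * |v| ^ (2 * (2 + l1)) := by
      rw [even_pow_abs, even_pow_abs]
    rw [habs]
    have h1 := mul_le_mul_of_nonneg_left hY1' (by positivity :
      (0:ℝ) ≤ 2 * ((2 * k + 1 : ℕ) : ℝ))
    calc 2 * ((2 * k + 1 : ℕ) : ℝ) * (|u| ^ (2 * k) * |v| ^ (2 * (2 + l1)))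
        ≤ 2 * ((2 * k + 1 : ℕ) : ℝ) * (μ / (6 * (2 * ((2 * k + 1 : ℕ) : ℝ))) * (u ^ A + v ^ B)) := h1
      _ = (μ / 6) * (u ^ A + v ^ B) := by
          field_simp
  -- bound bad term 2
  have hb2 : -(2 * ((2 * k + 1 : ℕ) : ℝ) * (u ^ (4 * k + 1) * v))
      ≤ (μ / 6) * (u ^ A + v ^ B) := by
    have habs : -(u ^ (4 * k + 1) * v) ≤ |u| ^ (4 * k + 1) * |v| := by
      calc -(u ^ (4 * k + 1) * v) ≤ |u ^ (4 * k + 1) * v| := neg_le_abs _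
        _ = |u| ^ (4 * k + 1) * |v| := by rw [abs_mul, abs_pow]
    have h1 : -(2 * ((2 * k + 1 : ℕ) : ℝ) * (u ^ (4 * k + 1) * v))
        = 2 * ((2 * k + 1 : ℕ) : ℝ) * (-(u ^ (4 * k + 1) * v)) := by ring
    rw [h1]
    calc 2 * ((2 * k + 1 : ℕ) : ℝ) * (-(u ^ (4 * k + 1) * v))
        ≤ 2 * ((2 * k + 1 : ℕ) : ℝ) * (|u| ^ (4 * k + 1) * |v|) :=
          mul_le_mul_of_nonneg_left habs (by positivity)
      _ ≤ 2 * ((2 * k + 1 : ℕ) : ℝ) * (μ / (6 * (2 * ((2 * k + 1 : ℕ) : ℝ))) * (u ^ A + v ^ B)) :=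
          mul_le_mul_of_nonneg_left hY2' (by positivity)
      _ = (μ / 6) * (u ^ A + v ^ B) := by
          field_simp
  -- bound bad term 3
  have hb3 : 2 * m * (u ^ (2 * k + 1) * v ^ (2 * s + 1)) ≤ (μ / 6) * (u ^ A + v ^ B) := by
    have habs : u ^ (2 * k + 1) * v ^ (2 * s + 1) ≤ |u| ^ (2 * k + 1) * |v| ^ (2 * s + 1) := by
      calc u ^ (2 * k + 1) * v ^ (2 * s + 1) ≤ |u ^ (2 * k + 1) * v ^ (2 * s + 1)| := le_abs_self _
        _ = |u| ^ (2 * k + 1) * |v| ^ (2 * s + 1) := by rw [abs_mul, abs_pow, abs_pow]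
    calc 2 * m * (u ^ (2 * k + 1) * v ^ (2 * s + 1))
        ≤ 2 * m * (|u| ^ (2 * k + 1) * |v| ^ (2 * s + 1)) :=
          mul_le_mul_of_nonneg_left habs (by positivity)
      _ ≤ 2 * m * (μ / (6 * (2 * m)) * (u ^ A + v ^ B)) :=
          mul_le_mul_of_nonneg_left hY3' (by positivity)
      _ = (μ / 6) * (u ^ A + v ^ B) := by
          field_simp
  -- combine
  have hpowA : (0:ℝ) ≤ u ^ A := by
    rw [show A = 2 * (k + 1) by omega, pow_mul]; positivity
  have hpowB : (0:ℝ) ≤ v ^ B := by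
    rw [show B = 2 * ((2 + l1) + s) by rw [hB]; ring, pow_mul]; positivity
  have hμA : μ * u ^ A ≤ u ^ A := mul_le_of_le_one_left hpowA hμ1
  have hμB : μ * v ^ B ≤ m * v ^ B := mul_le_mul_of_nonneg_right hμm hpowB
  linarith [hb1, hb2, hb3]

-- | Convergence of the pair from convergence of the "norm" N = x^2 + y^(2l)
lemma tendsto_pair_of_N (x y : ℝ → ℝ) (l : ℕ) (hl : 1 ≤ l)
    (hN : Tendsto (fun t => x t ^ 2 + y t ^ (2 * l)) atTop (𝓝 0)) :
    Tendsto (fun t => (x t, y t)) atTop (𝓝 ((0:ℝ), (0:ℝ))) := by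
  set N : ℝ → ℝ := fun t => x t ^ 2 + y t ^ (2 * l) with hNdef
  have hNnn : ∀ t, 0 ≤ N t := by
    intro t
    have h1 : 0 ≤ y t ^ (2 * l) := by rw [pow_mul]; positivity
    have h2 : 0 ≤ x t ^ 2 := sq_nonneg _
    simp only [hNdef]; linarith
  have hx : Tendsto x atTop (𝓝 0) := by
    apply squeeze_zero_norm (fun t => ?_) ((Real.continuous_sqrt.tendsto 0).comp hN |>.congr'
        (by filter_upwards with t using rfl) |>.mono_right (by rw [Real.sqrt_zero]))
    · show |x t| ≤ Real.sqrt (N t)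
      rw [← Real.sqrt_sq_eq_abs]
      apply Real.sqrt_le_sqrt
      have h1 : 0 ≤ y t ^ (2 * l) := by rw [pow_mul]; positivity
      simp only [hNdef]; linarith
  have hy : Tendsto y atTop (𝓝 0) := by
    have h2l : ((2 * l : ℕ) : ℝ) ≠ 0 := by
      have : 0 < 2 * l := by omega
      exact_mod_cast this.ne'
    have hg : Tendsto (fun t => (N t) ^ (((2 * l : ℕ) : ℝ))⁻¹) atTop (𝓝 0) := by
      have := hN.rpow_const (p := (((2 * l : ℕ) : ℝ))⁻¹) (Or.inr (by positivity))
      rwa [Real.zero_rpow (by positivity)] at this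
    apply squeeze_zero_norm (fun t => ?_) hg
    show |y t| ≤ (N t) ^ (((2 * l : ℕ) : ℝ))⁻¹
    have h1 : |y t| ^ (2 * l) ≤ N t := by
      rw [even_pow_abs]
      have h2 : 0 ≤ x t ^ 2 := sq_nonneg _
      simp only [hNdef]; linarith
    calc |y t| = (|y t| ^ (2 * l)) ^ (((2 * l : ℕ) : ℝ))⁻¹ :=
          (Real.pow_rpow_inv_natCast (abs_nonneg _) (by omega)).symm
      _ ≤ (N t) ^ (((2 * l : ℕ) : ℝ))⁻¹ :=
          Real.rpow_le_rpow (by positivity) h1 (by positivity)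
  exact hx.prodMk_nhds hy

section TestAttr
open Filter Topology Set

set_option maxHeartbeats 1200000 in
lemma attractor_of_lyap' (l k s : ℕ) (hl : 2 ≤ l) (hk : 1 ≤ k) (hs : 1 ≤ s)
    (hls : l ≤ 2 * s) (m : ℝ) (hm : m ≤ 0) : OriginAttractor l k s m := by
  have hl0 : (0:ℝ) < (l:ℝ) := by exact_mod_cast (by omega : 0 < l)
  have hl2 : (2:ℝ) ≤ (l:ℝ) := by exact_mod_cast hl
  obtain ⟨rI, ρ, hrIpos, hrIle, hρpos, hIneq⟩ := ineq1 l k s hl hk hs hls m hm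
  have hKl : l ≤ k * l := Nat.le_mul_of_pos_left l hk
  have hdefcond : 2 * (2 * l) < 1 * (2 * l) + (2 * (k * l) + 3) * 2 := by omega
  obtain ⟨rD, hrDpos, hrDle, hYD⟩ := young_aniso 2 (2 * l) 1 (2 * (k * l) + 3)
    (by omega) (by omega) hdefcond 1 one_pos
  set η : ℝ := 1 / (8 * (l:ℝ)) with hηdef
  have hηpos : 0 < η := by positivity
  set b : ℕ := 2 * (k * l) + 3 with hb
  set A : ℕ := 2 * k + 2 with hA
  set B : ℕ := 2 * l + 2 * (k * l) + 2 with hB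
  set γ : ℕ := A * B with hγ
  have hApos : 0 < A := by omega
  have hBpos : 0 < B := by omega
  have hγ1 : 1 ≤ γ := Nat.one_le_iff_ne_zero.mpr (by positivity)
  set r0 : ℝ := min rI rD with hr0
  have hr0pos : 0 < r0 := lt_min hrIpos hrDpos
  have hr0le1 : r0 ≤ 1 := le_trans (min_le_left _ _) hrIle
  set rN : ℝ := r0 ^ (2 * l) with hrN
  have hrNpos : 0 < rN := pow_pos hr0pos _
  have hrNle1 : rN ≤ 1 := pow_le_one₀ hr0pos.le hr0le1
  set c1 : ℝ := 1 / (8 * (l:ℝ)) with hc1def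
  have hc1pos : 0 < c1 := by positivity
  have hc1le1 : c1 ≤ 1 := by
    rw [hc1def, div_le_one (by positivity)]; linarith
  set κ : ℝ := ρ / 2 ^ γ with hκ
  have hκpos : 0 < κ := by positivity
  set δ : ℝ := min 1 (Real.sqrt (c1 * rN / 2)) with hδ
  have hδpos : 0 < δ := lt_min one_pos (Real.sqrt_pos.mpr (by positivity))
  refine ⟨δ, hδpos, ?_⟩
  intro x y hsol hinit0
  -- ball membership extraction
  have hball : ∀ t, 0 ≤ t → x t ^ 2 + y t ^ (2 * l) ≤ rN → |x t| ≤ r0 ∧ |y t| ≤ r0 := by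
    intro t _ hNt
    have hy2l : (0:ℝ) ≤ y t ^ (2 * l) := by rw [pow_mul]; positivity
    have hx2 : x t ^ 2 ≤ r0 ^ (2 * l) := by rw [← hrN]; linarith
    have hr2 : r0 ^ (2 * l) ≤ r0 ^ 2 := pow_le_pow_of_le_one hr0pos.le hr0le1 (by omega)
    constructor
    · have := Real.sqrt_le_sqrt (le_trans hx2 hr2)
      rwa [Real.sqrt_sq_eq_abs, Real.sqrt_sq hr0pos.le] at this
    · have h1 : |y t| ^ (2 * l) ≤ r0 ^ (2 * l) := by
        rw [even_pow_abs, ← hrN]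
        have := sq_nonneg (x t); linarith
      exact le_of_pow_le_pow_left₀ (by omega) hr0pos.le h1
  -- Lyapunov function and its derivative
  set F : ℝ → ℝ := fun t => y t ^ (2 * l - 1) - x t ^ (2 * k + 1) with hF
  set G : ℝ → ℝ := fun t => -x t + m * y t ^ (2 * s + 1) with hG
  set w : ℝ → ℝ := fun t => x t ^ 2 / 2 + y t ^ (2 * l) / ((2 * l : ℕ) : ℝ)
    + (-η) * (x t * y t ^ b) with hw
  set wd : ℝ → ℝ := fun t => x t * F t + y t ^ (2 * l - 1) * G t
    + (-η) * (F t * y t ^ b + ((b : ℕ) : ℝ) * x t * y t ^ (2 * (k * l) + 2) * G t) with hwd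
  have h2lne : ((2 * l : ℕ) : ℝ) ≠ 0 := by
    have : (0:ℕ) < 2 * l := by omega
    exact_mod_cast this.ne'
  have hderiv : ∀ t, 0 ≤ t → HasDerivWithinAt w (wd t) (Ici 0) t := by
    intro t ht
    have hx := (hsol t ht).1
    have hy := (hsol t ht).2
    have h1 := (hx.pow 2).div_const 2
    have h2 := (hy.pow (2 * l)).div_const ((2 * l : ℕ) : ℝ)
    have h3 := (hx.mul (hy.pow b)).const_mul (-η)
    have htot := (h1.add h2).add h3
    have heq : ((2:ℕ):ℝ) * x t ^ (2 - 1) * (y t ^ (2 * l - 1) - x t ^ (2 * k + 1)) / 2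
        + ((2 * l : ℕ) : ℝ) * y t ^ (2 * l - 1) * (-x t + m * y t ^ (2 * s + 1)) / ((2 * l : ℕ) : ℝ)
        + (-η) * ((y t ^ (2 * l - 1) - x t ^ (2 * k + 1)) * y t ^ b
            + x t * (((b : ℕ) : ℝ) * y t ^ (b - 1) * (-x t + m * y t ^ (2 * s + 1))))
        = wd t := by
      have hbm : b - 1 = 2 * (k * l) + 2 := by omega
      rw [hbm]
      simp only [hwd, hF, hG]
      field_simp
      ring
    exact heq ▸ htot
  -- definiteness bounds
  have hNnn : ∀ t, (0:ℝ) ≤ x t ^ 2 + y t ^ (2 * l) := by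
    intro t
    have h1 : (0:ℝ) ≤ y t ^ (2 * l) := by rw [pow_mul]; positivity
    have h2 := sq_nonneg (x t)
    linarith
  have hcross : ∀ t, 0 ≤ t → x t ^ 2 + y t ^ (2 * l) ≤ rN →
      |x t * y t ^ b| ≤ x t ^ 2 + y t ^ (2 * l) := by
    intro t ht hNt
    obtain ⟨hxr, hyr⟩ := hball t ht hNt
    have h1 := hYD |x t| |y t| (abs_nonneg _) (abs_nonneg _)
      (le_trans hxr (min_le_right _ _)) (le_trans hyr (min_le_right _ _))
    rw [pow_one] at h1
    calc |x t * y t ^ b| = |x t| * |y t| ^ b := by rw [abs_mul, abs_pow]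
      _ ≤ 1 * (|x t| ^ 2 + |y t| ^ (2 * l)) := h1
      _ = x t ^ 2 + y t ^ (2 * l) := by
          rw [one_mul, even_pow_abs, show (2:ℕ) = 2 * 1 by omega, even_pow_abs]
  have hηq : 2 * η ≤ 1 / (2 * (l:ℝ)) := by
    rw [hηdef]
    have e : (2:ℝ) * (1 / (8 * (l:ℝ))) = 1 / (4 * (l:ℝ)) := by
      field_simp; ring
    rw [e]
    exact one_div_le_one_div_of_le (by positivity) (by linarith)
  have h1l2 : 1 / (2 * (l:ℝ)) ≤ 1 / 2 :=
    one_div_le_one_div_of_le (by positivity) (by linarith)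
  have hη2 : 2 * η ≤ 1 / 2 := le_trans hηq h1l2
  have hlow : ∀ t, 0 ≤ t → x t ^ 2 + y t ^ (2 * l) ≤ rN →
      c1 * (x t ^ 2 + y t ^ (2 * l)) ≤ w t := by
    intro t ht hNt
    have h1 := hcross t ht hNt
    have h2 : -η * (x t * y t ^ b) ≥ -η * (x t ^ 2 + y t ^ (2 * l)) := by
      have h3 : x t * y t ^ b ≤ x t ^ 2 + y t ^ (2 * l) := le_trans (le_abs_self _) h1
      nlinarith
    have hy2l : (0:ℝ) ≤ y t ^ (2 * l) := by rw [pow_mul]; positivity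
    have hx2 := sq_nonneg (x t)
    have ecast : ((2 * l : ℕ) : ℝ) = 2 * (l:ℝ) := by push_cast; ring
    have e1 : y t ^ (2 * l) / ((2 * l : ℕ) : ℝ) = y t ^ (2 * l) * (1 / (2 * (l:ℝ))) := by
      rw [ecast]; ring
    have hc1η : c1 = η := rfl
    -- c1*(x²+Y) + η*(x²+Y) ≤ x²/2 + Y/(2l)
    have hkey : (c1 + η) * (x t ^ 2 + y t ^ (2 * l))
        ≤ x t ^ 2 / 2 + y t ^ (2 * l) / ((2 * l : ℕ) : ℝ) := by
      rw [e1]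
      have hcc : c1 + η = 2 * η := by rw [hc1η]; ring
      rw [hcc]
      have b1 : 2 * η * (x t ^ 2) ≤ 1/2 * x t ^ 2 := mul_le_mul_of_nonneg_right hη2 hx2
      have b2 : 2 * η * (y t ^ (2 * l)) ≤ 1 / (2 * (l:ℝ)) * y t ^ (2 * l) :=
        mul_le_mul_of_nonneg_right hηq hy2l
      calc 2 * η * (x t ^ 2 + y t ^ (2 * l))
          = 2 * η * (x t ^ 2) + 2 * η * (y t ^ (2 * l)) := by ring
        _ ≤ 1/2 * x t ^ 2 + 1 / (2 * (l:ℝ)) * y t ^ (2 * l) := add_le_add b1 b2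
        _ = x t ^ 2 / 2 + y t ^ (2 * l) * (1 / (2 * (l:ℝ))) := by ring
    simp only [hw]
    linarith [hkey, h2]
  have hup : ∀ t, 0 ≤ t → x t ^ 2 + y t ^ (2 * l) ≤ rN →
      w t ≤ x t ^ 2 + y t ^ (2 * l) := by
    intro t ht hNt
    have h1 := hcross t ht hNt
    have h2 : -η * (x t * y t ^ b) ≤ η * (x t ^ 2 + y t ^ (2 * l)) := by
      have h3 : -(x t * y t ^ b) ≤ x t ^ 2 + y t ^ (2 * l) := le_trans (neg_le_abs _) h1
      nlinarith
    have hy2l : (0:ℝ) ≤ y t ^ (2 * l) := by rw [pow_mul]; positivity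
    have hx2 := sq_nonneg (x t)
    have ecast : ((2 * l : ℕ) : ℝ) = 2 * (l:ℝ) := by push_cast; ring
    have e1 : y t ^ (2 * l) / ((2 * l : ℕ) : ℝ) = y t ^ (2 * l) * (1 / (2 * (l:ℝ))) := by
      rw [ecast]; ring
    have h4 : y t ^ (2 * l) * (1 / (2 * (l:ℝ))) ≤ y t ^ (2 * l) * (1/2) :=
      mul_le_mul_of_nonneg_left h1l2 hy2l
    have hη12 : η ≤ 1/2 := by linarith
    have h5 : -η * (x t * y t ^ b) ≤ 1/2 * (x t ^ 2 + y t ^ (2 * l)) := by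
      have h6 : η * (x t ^ 2 + y t ^ (2 * l)) ≤ 1/2 * (x t ^ 2 + y t ^ (2 * l)) :=
        mul_le_mul_of_nonneg_right hη12 (hNnn t)
      linarith
    simp only [hw]
    rw [e1]
    linarith [h5, h4, hx2, hy2l]
  -- the decay estimate
  have hdec : ∀ t, 0 ≤ t → x t ^ 2 + y t ^ (2 * l) ≤ rN → wd t ≤ -κ * w t ^ γ := by
    intro t ht hNt
    obtain ⟨hxr, hyr⟩ := hball t ht hNt
    have hIt := hIneq (x t) (y t) (le_trans hxr (min_le_left _ _))
      (le_trans hyr (min_le_left _ _))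
    have hwdle : wd t ≤ -ρ * (x t ^ A + y t ^ B) := hIt
    have hx1 : |x t| ≤ 1 := le_trans hxr hr0le1
    have hy1 : |y t| ≤ 1 := le_trans hyr hr0le1
    have condA : A ≤ 2 * γ := by
      calc A = A * 1 := (mul_one A).symm
        _ ≤ A * (2 * B) := Nat.mul_le_mul_left A (by omega)
        _ = 2 * γ := by rw [hγ]; ring
    have condB : B ≤ 2 * l * γ := by
      calc B = 1 * B := (one_mul B).symm
        _ ≤ (2 * l * A) * B := Nat.mul_le_mul_right B
            (Nat.one_le_iff_ne_zero.mpr (Nat.mul_ne_zero (by omega) hApos.ne'))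
        _ = 2 * l * γ := by rw [hγ]; ring
    have hNpow := Npow_le (x t) (y t) hx1 hy1 l A B γ condA condB
    have hAe : |x t| ^ A = x t ^ A := by
      rw [show A = 2 * (k + 1) by omega]; exact even_pow_abs _ _
    have hBe : |y t| ^ B = y t ^ B := by
      rw [show B = 2 * (l + k * l + 1) by rw [hB]; ring]; exact even_pow_abs _ _
    rw [hAe, hBe] at hNpow
    have hwnn : 0 ≤ w t := le_trans (mul_nonneg hc1pos.le (hNnn t)) (hlow t ht hNt)
    have hwle : w t ≤ x t ^ 2 + y t ^ (2 * l) := hup t ht hNt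
    have hwpow : w t ^ γ ≤ (x t ^ 2 + y t ^ (2 * l)) ^ γ := pow_le_pow_left₀ hwnn hwle γ
    have h2γpos : (0:ℝ) < 2 ^ γ := by positivity
    have hchain : w t ^ γ ≤ 2 ^ γ * (x t ^ A + y t ^ B) := le_trans hwpow hNpow
    calc wd t ≤ -ρ * (x t ^ A + y t ^ B) := hwdle
      _ ≤ -κ * w t ^ γ := by
          rw [hκ]
          rw [neg_mul, neg_mul, neg_le_neg_iff]
          rw [div_mul_eq_mul_div, div_le_iff₀ h2γpos]
          calc ρ * w t ^ γ ≤ ρ * (2 ^ γ * (x t ^ A + y t ^ B)) :=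
                mul_le_mul_of_nonneg_left hchain hρpos.le
            _ = ρ * (x t ^ A + y t ^ B) * 2 ^ γ := by ring
  -- initial condition
  have hinit : x 0 ^ 2 + y 0 ^ (2 * l) ≤ c1 * rN / 2 := by
    have hy0 : y 0 ^ 2 ≤ δ ^ 2 := by nlinarith [sq_nonneg (x 0), sq_nonneg (y 0)]
    have hδ1 : δ ≤ 1 := min_le_left _ _
    have hy01 : y 0 ^ 2 ≤ 1 := le_trans hy0 (by nlinarith [hδpos])
    have h1 : y 0 ^ (2 * l) ≤ y 0 ^ 2 := by
      rw [pow_mul]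
      calc (y 0 ^ 2) ^ l ≤ (y 0 ^ 2) ^ 1 := pow_le_pow_of_le_one (sq_nonneg _) hy01 (by omega)
        _ = y 0 ^ 2 := pow_one _
    have h2 : x 0 ^ 2 + y 0 ^ (2 * l) < δ ^ 2 := by nlinarith
    have h3 : δ ^ 2 ≤ c1 * rN / 2 := by
      rcases le_total (Real.sqrt (c1 * rN / 2)) 1 with hc | hc
      · have : δ = Real.sqrt (c1 * rN / 2) := min_eq_right hc
        rw [this, Real.sq_sqrt (by positivity)]
      · have : δ = 1 := min_eq_left hc
        rw [this, one_pow]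
        nlinarith [Real.sq_sqrt (show (0:ℝ) ≤ c1 * rN / 2 by positivity),
          Real.sqrt_nonneg (c1 * rN / 2)]
    linarith
  have hxc : ContinuousOn x (Ici 0) := fun t ht => ((hsol t ht).1).continuousWithinAt
  have hyc : ContinuousOn y (Ici 0) := fun t ht => ((hsol t ht).2).continuousWithinAt
  have hNtend := flow_main x y w wd l γ rN κ c1 hγ1 hrNpos hκpos hc1pos hc1le1
    hxc hyc hderiv hlow hup hdec hinit
  exact tendsto_pair_of_N x y l (by omega) hNtend
end TestAttr


set_option maxHeartbeats 1200000 in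
lemma repeller_of_lyap' (l k s : ℕ) (hl : 2 ≤ l) (hk : 1 ≤ k) (hs : 1 ≤ s)
    (hls : l ≤ 2 * s) (hskl : s < k * l) (m : ℝ) (hm : 0 < m) : OriginRepeller l k s m := by
  have hl0 : (0:ℝ) < (l:ℝ) := by exact_mod_cast (by omega : 0 < l)
  have hl2 : (2:ℝ) ≤ (l:ℝ) := by exact_mod_cast hl
  obtain ⟨rI, ρ, hrIpos, hrIle, hρpos, hIneq⟩ := ineq2 l k s hl hk hs hls hskl m hm
  have hKl : l ≤ k * l := Nat.le_mul_of_pos_left l hk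
  have hdefcond : 2 * (2 * l) < (2 * k + 1) * (2 * l) + 1 * 2 := by
    have e : (2 * k + 1) * (2 * l) = 4 * (k * l) + 2 * l := by ring
    omega
  obtain ⟨rD, hrDpos, hrDle, hYD⟩ := young_aniso 2 (2 * l) (2 * k + 1) 1
    (by omega) (by omega) hdefcond (1 / (8 * (l:ℝ))) (by positivity)
  set A : ℕ := 2 * k + 2 with hA
  set B : ℕ := 2 * l + 2 * s with hB
  set γ : ℕ := A * B with hγ
  have hApos : 0 < A := by omega
  have hBpos : 0 < B := by omega
  have hγ1 : 1 ≤ γ := Nat.one_le_iff_ne_zero.mpr (by positivity)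
  set r0 : ℝ := min rI rD with hr0
  have hr0pos : 0 < r0 := lt_min hrIpos hrDpos
  have hr0le1 : r0 ≤ 1 := le_trans (min_le_left _ _) hrIle
  set rN : ℝ := r0 ^ (2 * l) with hrN
  have hrNpos : 0 < rN := pow_pos hr0pos _
  have hrNle1 : rN ≤ 1 := pow_le_one₀ hr0pos.le hr0le1
  set c1 : ℝ := 1 / (8 * (l:ℝ)) with hc1def
  have hc1pos : 0 < c1 := by positivity
  have hc1le1 : c1 ≤ 1 := by
    rw [hc1def, div_le_one (by positivity)]; linarith
  set κ : ℝ := ρ / 2 ^ γ with hκ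
  have hκpos : 0 < κ := by positivity
  set δ : ℝ := min 1 (Real.sqrt (c1 * rN / 2)) with hδ
  have hδpos : 0 < δ := lt_min one_pos (Real.sqrt_pos.mpr (by positivity))
  refine ⟨δ, hδpos, ?_⟩
  intro x0 y0 hsol hinit0
  -- time-reversed functions
  set x : ℝ → ℝ := fun τ => x0 (-τ) with hxdef
  set y : ℝ → ℝ := fun τ => y0 (-τ) with hydef
  set F : ℝ → ℝ := fun τ => x τ ^ (2 * k + 1) - y τ ^ (2 * l - 1) with hF
  set G : ℝ → ℝ := fun τ => x τ - m * y τ ^ (2 * s + 1) with hG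
  have hnegd : ∀ τ : ℝ, HasDerivWithinAt (fun τ : ℝ => -τ) (-1) (Ici 0) τ :=
    fun τ => (hasDerivAt_neg τ).hasDerivWithinAt
  have hmaps : MapsTo (fun τ : ℝ => -τ) (Ici (0:ℝ)) (Iic (0:ℝ)) := by
    intro τ ht
    simp only [mem_Iic]
    simp only [mem_Ici] at ht
    linarith
  have hxd : ∀ τ, 0 ≤ τ → HasDerivWithinAt x (F τ) (Ici 0) τ := by
    intro τ ht
    have hb := (hsol (-τ) (by linarith)).1
    have hcomp := HasDerivWithinAt.comp τ hb (hnegd τ) hmaps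
    have heq : (y0 (-τ) ^ (2 * l - 1) - x0 (-τ) ^ (2 * k + 1)) * (-1) = F τ := by
      simp only [hF, hxdef, hydef]
      ring
    rw [← heq]
    exact hcomp
  have hyd : ∀ τ, 0 ≤ τ → HasDerivWithinAt y (G τ) (Ici 0) τ := by
    intro τ ht
    have hb := (hsol (-τ) (by linarith)).2
    have hcomp := HasDerivWithinAt.comp τ hb (hnegd τ) hmaps
    have heq : (-x0 (-τ) + m * y0 (-τ) ^ (2 * s + 1)) * (-1) = G τ := by
      simp only [hG, hxdef, hydef]
      ring
    rw [← heq]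
    exact hcomp
  -- ball membership extraction
  have hball : ∀ t, 0 ≤ t → x t ^ 2 + y t ^ (2 * l) ≤ rN → |x t| ≤ r0 ∧ |y t| ≤ r0 := by
    intro t _ hNt
    have hy2l : (0:ℝ) ≤ y t ^ (2 * l) := by rw [pow_mul]; positivity
    have hx2 : x t ^ 2 ≤ r0 ^ (2 * l) := by rw [← hrN]; linarith
    have hr2 : r0 ^ (2 * l) ≤ r0 ^ 2 := pow_le_pow_of_le_one hr0pos.le hr0le1 (by omega)
    constructor
    · have := Real.sqrt_le_sqrt (le_trans hx2 hr2)
      rwa [Real.sqrt_sq_eq_abs, Real.sqrt_sq hr0pos.le] at this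
    · have h1 : |y t| ^ (2 * l) ≤ r0 ^ (2 * l) := by
        rw [even_pow_abs, ← hrN]
        have := sq_nonneg (x t); linarith
      exact le_of_pow_le_pow_left₀ (by omega) hr0pos.le h1
  -- Lyapunov function
  set w : ℝ → ℝ := fun t => x t ^ 2 / 2 + y t ^ (2 * l) / ((2 * l : ℕ) : ℝ)
    + (-2 : ℝ) * (x t ^ (2 * k + 1) * y t) with hw
  set wd : ℝ → ℝ := fun t => x t * F t + y t ^ (2 * l - 1) * G t
    + (-2 : ℝ) * (((2 * k + 1 : ℕ) : ℝ) * x t ^ (2 * k) * F t * y t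
        + x t ^ (2 * k + 1) * G t) with hwd
  have h2lne : ((2 * l : ℕ) : ℝ) ≠ 0 := by
    have : (0:ℕ) < 2 * l := by omega
    exact_mod_cast this.ne'
  have hderiv : ∀ t, 0 ≤ t → HasDerivWithinAt w (wd t) (Ici 0) t := by
    intro t ht
    have hx := hxd t ht
    have hy := hyd t ht
    have h1 := (hx.pow 2).div_const 2
    have h2 := (hy.pow (2 * l)).div_const ((2 * l : ℕ) : ℝ)
    have h3 := ((hx.pow (2 * k + 1)).mul hy).const_mul (-2 : ℝ)
    have htot := (h1.add h2).add h3
    have heq : ((2:ℕ):ℝ) * x t ^ (2 - 1) * F t / 2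
        + ((2 * l : ℕ) : ℝ) * y t ^ (2 * l - 1) * G t / ((2 * l : ℕ) : ℝ)
        + (-2 : ℝ) * (((2 * k + 1 : ℕ) : ℝ) * x t ^ (2 * k + 1 - 1) * F t * y t
            + x t ^ (2 * k + 1) * G t)
        = wd t := by
      have hkm : 2 * k + 1 - 1 = 2 * k := by omega
      rw [hkm]
      simp only [hwd]
      field_simp
      ring
    rw [← heq]
    exact htot
  -- definiteness
  have hNnn : ∀ t, (0:ℝ) ≤ x t ^ 2 + y t ^ (2 * l) := by
    intro t
    have h1 : (0:ℝ) ≤ y t ^ (2 * l) := by rw [pow_mul]; positivity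
    have h2 := sq_nonneg (x t)
    linarith
  have hcross : ∀ t, 0 ≤ t → x t ^ 2 + y t ^ (2 * l) ≤ rN →
      |x t ^ (2 * k + 1) * y t| ≤ 1 / (8 * (l:ℝ)) * (x t ^ 2 + y t ^ (2 * l)) := by
    intro t ht hNt
    obtain ⟨hxr, hyr⟩ := hball t ht hNt
    have h1 := hYD |x t| |y t| (abs_nonneg _) (abs_nonneg _)
      (le_trans hxr (min_le_right _ _)) (le_trans hyr (min_le_right _ _))
    rw [pow_one] at h1
    calc |x t ^ (2 * k + 1) * y t| = |x t| ^ (2 * k + 1) * |y t| := by rw [abs_mul, abs_pow]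
      _ ≤ 1 / (8 * (l:ℝ)) * (|x t| ^ 2 + |y t| ^ (2 * l)) := h1
      _ = 1 / (8 * (l:ℝ)) * (x t ^ 2 + y t ^ (2 * l)) := by
          rw [even_pow_abs, show (2:ℕ) = 2 * 1 by omega, even_pow_abs]
  have h1l2 : 1 / (2 * (l:ℝ)) ≤ 1 / 2 :=
    one_div_le_one_div_of_le (by positivity) (by linarith)
  have hq1 : c1 + 2 * (1 / (8 * (l:ℝ))) ≤ 1 / (2 * (l:ℝ)) := by
    rw [hc1def]
    have e : 1 / (8 * (l:ℝ)) + 2 * (1 / (8 * (l:ℝ))) = 3 / (8 * (l:ℝ)) := by ring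
    rw [e, div_le_div_iff₀ (by positivity) (by positivity)]
    nlinarith
  have hq2 : c1 + 2 * (1 / (8 * (l:ℝ))) ≤ 1 / 2 := le_trans hq1 h1l2
  have hlow : ∀ t, 0 ≤ t → x t ^ 2 + y t ^ (2 * l) ≤ rN →
      c1 * (x t ^ 2 + y t ^ (2 * l)) ≤ w t := by
    intro t ht hNt
    have h1 := hcross t ht hNt
    have h2 : (-2 : ℝ) * (x t ^ (2 * k + 1) * y t)
        ≥ -(2 * (1 / (8 * (l:ℝ)))) * (x t ^ 2 + y t ^ (2 * l)) := by
      have h3 : x t ^ (2 * k + 1) * y t ≤ 1 / (8 * (l:ℝ)) * (x t ^ 2 + y t ^ (2 * l)) :=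
        le_trans (le_abs_self _) h1
      nlinarith
    have hy2l : (0:ℝ) ≤ y t ^ (2 * l) := by rw [pow_mul]; positivity
    have hx2 := sq_nonneg (x t)
    have ecast : ((2 * l : ℕ) : ℝ) = 2 * (l:ℝ) := by push_cast; ring
    have e1 : y t ^ (2 * l) / ((2 * l : ℕ) : ℝ) = y t ^ (2 * l) * (1 / (2 * (l:ℝ))) := by
      rw [ecast]; ring
    have hkey : (c1 + 2 * (1 / (8 * (l:ℝ)))) * (x t ^ 2 + y t ^ (2 * l))
        ≤ x t ^ 2 / 2 + y t ^ (2 * l) / ((2 * l : ℕ) : ℝ) := by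
      rw [e1]
      have b1 : (c1 + 2 * (1 / (8 * (l:ℝ)))) * (x t ^ 2) ≤ 1/2 * x t ^ 2 :=
        mul_le_mul_of_nonneg_right hq2 hx2
      have b2 : (c1 + 2 * (1 / (8 * (l:ℝ)))) * (y t ^ (2 * l))
          ≤ 1 / (2 * (l:ℝ)) * y t ^ (2 * l) :=
        mul_le_mul_of_nonneg_right hq1 hy2l
      calc (c1 + 2 * (1 / (8 * (l:ℝ)))) * (x t ^ 2 + y t ^ (2 * l))
          = (c1 + 2 * (1 / (8 * (l:ℝ)))) * (x t ^ 2)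
            + (c1 + 2 * (1 / (8 * (l:ℝ)))) * (y t ^ (2 * l)) := by ring
        _ ≤ 1/2 * x t ^ 2 + 1 / (2 * (l:ℝ)) * y t ^ (2 * l) := add_le_add b1 b2
        _ = x t ^ 2 / 2 + y t ^ (2 * l) * (1 / (2 * (l:ℝ))) := by ring
    simp only [hw]
    linarith [hkey, h2]
  have hup : ∀ t, 0 ≤ t → x t ^ 2 + y t ^ (2 * l) ≤ rN →
      w t ≤ x t ^ 2 + y t ^ (2 * l) := by
    intro t ht hNt
    have h1 := hcross t ht hNt
    have h2 : (-2 : ℝ) * (x t ^ (2 * k + 1) * y t)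
        ≤ 2 * (1 / (8 * (l:ℝ))) * (x t ^ 2 + y t ^ (2 * l)) := by
      have h3 : -(x t ^ (2 * k + 1) * y t) ≤ 1 / (8 * (l:ℝ)) * (x t ^ 2 + y t ^ (2 * l)) :=
        le_trans (neg_le_abs _) h1
      nlinarith
    have hy2l : (0:ℝ) ≤ y t ^ (2 * l) := by rw [pow_mul]; positivity
    have hx2 := sq_nonneg (x t)
    have ecast : ((2 * l : ℕ) : ℝ) = 2 * (l:ℝ) := by push_cast; ring
    have e1 : y t ^ (2 * l) / ((2 * l : ℕ) : ℝ) = y t ^ (2 * l) * (1 / (2 * (l:ℝ))) := by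
      rw [ecast]; ring
    have h4 : y t ^ (2 * l) * (1 / (2 * (l:ℝ))) ≤ y t ^ (2 * l) * (1/2) :=
      mul_le_mul_of_nonneg_left h1l2 hy2l
    have h5 : 2 * (1 / (8 * (l:ℝ))) * (x t ^ 2 + y t ^ (2 * l))
        ≤ 1/2 * (x t ^ 2 + y t ^ (2 * l)) := by
      apply mul_le_mul_of_nonneg_right _ (hNnn t)
      have e : (2:ℝ) * (1 / (8 * (l:ℝ))) = 1 / (4 * (l:ℝ)) := by
        field_simp; ring
      rw [e]
      calc 1 / (4 * (l:ℝ)) ≤ 1 / (2 * (l:ℝ)) :=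
            one_div_le_one_div_of_le (by positivity) (by linarith)
        _ ≤ 1 / 2 := h1l2
    simp only [hw]
    rw [e1]
    linarith [h2, h4, hx2, hy2l, h5]
  -- decay
  have hdec : ∀ t, 0 ≤ t → x t ^ 2 + y t ^ (2 * l) ≤ rN → wd t ≤ -κ * w t ^ γ := by
    intro t ht hNt
    obtain ⟨hxr, hyr⟩ := hball t ht hNt
    have hIt := hIneq (x t) (y t) (le_trans hxr (min_le_left _ _))
      (le_trans hyr (min_le_left _ _))
    have hwdle : wd t ≤ -ρ * (x t ^ A + y t ^ B) := hIt
    have hx1 : |x t| ≤ 1 := le_trans hxr hr0le1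
    have hy1 : |y t| ≤ 1 := le_trans hyr hr0le1
    have condA : A ≤ 2 * γ := by
      calc A = A * 1 := (mul_one A).symm
        _ ≤ A * (2 * B) := Nat.mul_le_mul_left A (by omega)
        _ = 2 * γ := by rw [hγ]; ring
    have condB : B ≤ 2 * l * γ := by
      calc B = 1 * B := (one_mul B).symm
        _ ≤ (2 * l * A) * B := Nat.mul_le_mul_right B
            (Nat.one_le_iff_ne_zero.mpr (Nat.mul_ne_zero (by omega) hApos.ne'))
        _ = 2 * l * γ := by rw [hγ]; ring
    have hNpow := Npow_le (x t) (y t) hx1 hy1 l A B γ condA condB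
    have hAe : |x t| ^ A = x t ^ A := by
      rw [show A = 2 * (k + 1) by omega]; exact even_pow_abs _ _
    have hBe : |y t| ^ B = y t ^ B := by
      rw [show B = 2 * (l + s) by rw [hB]; ring]; exact even_pow_abs _ _
    rw [hAe, hBe] at hNpow
    have hwnn : 0 ≤ w t := le_trans (mul_nonneg hc1pos.le (hNnn t)) (hlow t ht hNt)
    have hwle : w t ≤ x t ^ 2 + y t ^ (2 * l) := hup t ht hNt
    have hwpow : w t ^ γ ≤ (x t ^ 2 + y t ^ (2 * l)) ^ γ := pow_le_pow_left₀ hwnn hwle γ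
    have h2γpos : (0:ℝ) < 2 ^ γ := by positivity
    have hchain : w t ^ γ ≤ 2 ^ γ * (x t ^ A + y t ^ B) := le_trans hwpow hNpow
    calc wd t ≤ -ρ * (x t ^ A + y t ^ B) := hwdle
      _ ≤ -κ * w t ^ γ := by
          rw [hκ]
          rw [neg_mul, neg_mul, neg_le_neg_iff]
          rw [div_mul_eq_mul_div, div_le_iff₀ h2γpos]
          calc ρ * w t ^ γ ≤ ρ * (2 ^ γ * (x t ^ A + y t ^ B)) :=
                mul_le_mul_of_nonneg_left hchain hρpos.le
            _ = ρ * (x t ^ A + y t ^ B) * 2 ^ γ := by ring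
  -- initial condition
  have hx00 : x 0 = x0 0 := by simp [hxdef]
  have hy00 : y 0 = y0 0 := by simp [hydef]
  have hinit : x 0 ^ 2 + y 0 ^ (2 * l) ≤ c1 * rN / 2 := by
    rw [hx00, hy00]
    have hy0 : y0 0 ^ 2 ≤ δ ^ 2 := by nlinarith [sq_nonneg (x0 0), sq_nonneg (y0 0)]
    have hδ1 : δ ≤ 1 := min_le_left _ _
    have hy01 : y0 0 ^ 2 ≤ 1 := le_trans hy0 (by nlinarith [hδpos])
    have h1 : y0 0 ^ (2 * l) ≤ y0 0 ^ 2 := by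
      rw [pow_mul]
      calc (y0 0 ^ 2) ^ l ≤ (y0 0 ^ 2) ^ 1 := pow_le_pow_of_le_one (sq_nonneg _) hy01 (by omega)
        _ = y0 0 ^ 2 := pow_one _
    have h2 : x0 0 ^ 2 + y0 0 ^ (2 * l) < δ ^ 2 := by nlinarith
    have h3 : δ ^ 2 ≤ c1 * rN / 2 := by
      rcases le_total (Real.sqrt (c1 * rN / 2)) 1 with hc | hc
      · have : δ = Real.sqrt (c1 * rN / 2) := min_eq_right hc
        rw [this, Real.sq_sqrt (by positivity)]
      · have : δ = 1 := min_eq_left hc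
        rw [this, one_pow]
        nlinarith [Real.sq_sqrt (show (0:ℝ) ≤ c1 * rN / 2 by positivity),
          Real.sqrt_nonneg (c1 * rN / 2)]
    linarith
  have hxc : ContinuousOn x (Ici 0) := fun t ht => (hxd t ht).continuousWithinAt
  have hyc : ContinuousOn y (Ici 0) := fun t ht => (hyd t ht).continuousWithinAt
  have hNtend := flow_main x y w wd l γ rN κ c1 hγ1 hrNpos hκpos hc1pos hc1le1
    hxc hyc hderiv hlow hup hdec hinit
  have hpair := tendsto_pair_of_N x y l (by omega) hNtend
  have hcomp := hpair.comp tendsto_neg_atBot_atTop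
  have hfun : (fun t : ℝ => (x0 t, y0 t)) = (fun τ => (x τ, y τ)) ∘ (fun t : ℝ => -t) := by
    funext t
    simp [Function.comp, hxdef, hydef]
  rw [hfun]
  exact hcomp

/-- Theorem 1.2 (i): when s < kl, the origin is an attractor for m ≤ 0 and a
repeller for m > 0. -/
theorem origin_stability_s_lt_kl (l k s : ℕ) (hl : 2 ≤ l) (hk : 1 ≤ k) (hs : 1 ≤ s)
    (hls : l ≤ 2 * s) (hskl : s < k * l) (m : ℝ) :
    (m ≤ 0 → OriginAttractor l k s m) ∧ (0 < m → OriginRepeller l k s m) :=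
  ⟨fun hm => attractor_of_lyap' l k s hl hk hs hls m hm,
   fun hm => repeller_of_lyap' l k s hl hk hs hls hskl m hm⟩
end

section
/- Consider the planar system ẋ = y^{2l−1} − x^{2k+1}, ẏ = −x + m·y^{2s+1} with positive integers l, k, s satisfying 2 ≤ l ≤ 2s and with s > kl. Then for every real number m the origin is an attractor. -/
open Filter Topology Set

namespace OAuxAttr

lemma antitoneOn_aux {f F : ℝ → ℝ} {T : ℝ}
    (hf : ∀ t ∈ Ici (0:ℝ), HasDerivWithinAt f (F t) (Ici 0) t)
    (hF : ∀ t ∈ Ioo (0:ℝ) T, F t ≤ 0) :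
    AntitoneOn f (Icc 0 T) := by
  have cont : ContinuousOn f (Icc 0 T) := fun t ht =>
    ((hf t ht.1).continuousWithinAt).mono (Icc_subset_Ici_self)
  have hd : ∀ t ∈ Ioo (0:ℝ) T, HasDerivAt f (F t) t := fun t ht =>
    (hf t (le_of_lt ht.1)).hasDerivAt (Ici_mem_nhds ht.1)
  apply antitoneOn_of_deriv_nonpos (convex_Icc 0 T) cont
  · rw [interior_Icc]; exact fun t ht => (hd t ht).differentiableAt.differentiableWithinAt
  · rw [interior_Icc]; intro t ht; rw [(hd t ht).deriv]; exact hF t ht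

lemma termB1 (k l : ℕ) (a b Λ : ℝ) (ha : 0 ≤ a) (hb : 0 ≤ b) (hΛ : 0 < Λ) :
    a^2 * b^(2*k*l) ≤ Λ^k * a^(2*k+2) + (1/Λ) * b^(2*k*l+2*l) := by
  rcases le_total (a^2) ((1/Λ) * b^(2*l)) with h | h
  · have h1 : a^2 * b^(2*k*l) ≤ (1/Λ) * b^(2*l) * b^(2*k*l) := by
      exact mul_le_mul_of_nonneg_right h (by positivity)
    have h2 : (1/Λ) * b^(2*l) * b^(2*k*l) = (1/Λ) * b^(2*k*l+2*l) := by
      rw [mul_assoc, ← pow_add]; ring_nf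
    nlinarith [pow_nonneg ha (2*k+2), pow_pos hΛ k]
  · have hb2 : b^(2*l) ≤ Λ * a^2 := by
      have heq : b^(2*l) = Λ * ((1/Λ)*b^(2*l)) := by field_simp
      nlinarith [mul_le_mul_of_nonneg_left h hΛ.le]
    have h3 : b^(2*k*l) = (b^(2*l))^k := by rw [← pow_mul]; congr 1; ring
    have h4 : (b^(2*l))^k ≤ (Λ * a^2)^k :=
      pow_le_pow_left₀ (by positivity) hb2 k
    have h5 : a^2 * b^(2*k*l) ≤ a^2 * (Λ^k * a^(2*k)) := by
      rw [h3]
      calc a^2 * (b^(2*l))^k ≤ a^2 * (Λ*a^2)^k :=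
            mul_le_mul_of_nonneg_left h4 (by positivity)
        _ = a^2 * (Λ^k * a^(2*k)) := by rw [mul_pow, ← pow_mul]
    have h6 : a^2 * (Λ^k * a^(2*k)) = Λ^k * a^(2*k+2) := by rw [pow_add]; ring
    nlinarith [pow_nonneg hb (2*k*l+2*l), le_of_lt (one_div_pos.2 hΛ)]

lemma termB2 (k l : ℕ) (hk : 1 ≤ k) (a b δ : ℝ) (ha0 : 0 ≤ a) (hb0 : 0 ≤ b)
    (haδ : a ≤ δ) (hbδ : b ≤ δ) (hδ1 : δ ≤ 1) :
    a^(2*k+1) * b^(2*k*l+1) ≤ δ * a^(2*k+2) + δ * b^(2*k*l+2*l) := by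
  have ha1 : a ≤ 1 := haδ.trans hδ1
  have hb1 : b ≤ 1 := hbδ.trans hδ1
  rcases le_total (b^l) a with hba | hab
  · have h1 : b^(2*k*l+1) ≤ b^(2*k*l) := pow_le_pow_of_le_one hb0 hb1 (by omega)
    have h2 : b^(2*k*l) = (b^l)^(2*k) := by rw [← pow_mul]; congr 1; ring
    have h3 : (b^l)^(2*k) ≤ a^(2*k) := pow_le_pow_left₀ (by positivity) hba _
    have h4 : a^(2*k+1) * b^(2*k*l+1) ≤ a^(2*k+1) * a^(2*k) := by
      apply mul_le_mul_of_nonneg_left _ (by positivity)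
      exact h1.trans (h2 ▸ h3)
    have h5 : a^(2*k+1) * a^(2*k) = a^(2*k-1) * a^(2*k+2) := by
      rw [← pow_add, ← pow_add]; congr 1; omega
    have h6 : a^(2*k-1) ≤ δ := (pow_le_of_le_one ha0 ha1 (by omega)).trans haδ
    have h7 : a^(2*k-1) * a^(2*k+2) ≤ δ * a^(2*k+2) :=
      mul_le_mul_of_nonneg_right h6 (by positivity)
    nlinarith [pow_nonneg hb0 (2*k*l+2*l), mul_nonneg (le_trans ha0 haδ) (pow_nonneg hb0 (2*k*l+2*l))]
  · have h1 : a^(2*k+1) ≤ (b^l)^(2*k+1) := pow_le_pow_left₀ ha0 hab _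
    have h2 : (b^l)^(2*k+1) = b^(2*k*l+l) := by rw [← pow_mul]; congr 1; ring
    have h3 : a^(2*k+1) * b^(2*k*l+1) ≤ b^(2*k*l+l) * b^(2*k*l+1) := by
      apply mul_le_mul_of_nonneg_right (h1.trans (le_of_eq h2)) (by positivity)
    have h4 : b^(2*k*l+l) * b^(2*k*l+1) = b^(2*k*l+l+(2*k*l+1)) := by rw [← pow_add]
    have h5 : b^(2*k*l+l+(2*k*l+1)) ≤ b^(2*k*l+2*l+1) :=
      pow_le_pow_of_le_one hb0 hb1 (by nlinarith [Nat.one_le_iff_ne_zero.1 hk])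
    have h6 : b^(2*k*l+2*l+1) = b * b^(2*k*l+2*l) := by rw [← pow_succ']
    have h7 : b * b^(2*k*l+2*l) ≤ δ * b^(2*k*l+2*l) :=
      mul_le_mul_of_nonneg_right hbδ (by positivity)
    nlinarith [pow_nonneg ha0 (2*k+2), mul_nonneg (hb0.trans hbδ) (pow_nonneg ha0 (2*k+2))]

lemma termB3 (k l s : ℕ) (hskl : k*l < s) (b δ : ℝ) (hb0 : 0 ≤ b) (hbδ : b ≤ δ) (hδ1 : δ ≤ 1) :
    b^(2*l+2*s) ≤ δ^2 * b^(2*k*l+2*l) := by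
  have hb1 : b ≤ 1 := hbδ.trans hδ1
  have h1 : b^(2*l+2*s) ≤ b^(2*k*l+2*l+2) :=
    pow_le_pow_of_le_one hb0 hb1 (by have e : 2*k*l = 2*(k*l) := Nat.mul_assoc 2 k l; omega)
  have h2 : b^(2*k*l+2*l+2) = b^2 * b^(2*k*l+2*l) := by rw [← pow_add]; congr 1; omega
  have h3 : b^2 ≤ δ^2 := pow_le_pow_left₀ hb0 hbδ 2
  nlinarith [pow_nonneg hb0 (2*k*l+2*l)]

lemma termB4 (k l s : ℕ) (hk : 1 ≤ k) (hl : 2 ≤ l) (hls : l ≤ 2*s) (a b δ : ℝ)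
    (ha0 : 0 ≤ a) (hb0 : 0 ≤ b) (haδ : a ≤ δ) (hbδ : b ≤ δ) (hδ1 : δ ≤ 1) :
    a * b^(2*k*l+2*s+1) ≤ a^(2*k+2) + δ * b^(2*k*l+2*l) := by
  have ha1 : a ≤ 1 := haδ.trans hδ1
  have hb1 : b ≤ 1 := hbδ.trans hδ1
  rcases le_total (b^l) a with hba | hab
  · have h1 : b^(2*k*l+2*s+1) ≤ b^(2*k*l+l) := pow_le_pow_of_le_one hb0 hb1 (by omega)
    have h2 : b^(2*k*l+l) = (b^l)^(2*k+1) := by rw [← pow_mul]; congr 1; ring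
    have h3 : (b^l)^(2*k+1) ≤ a^(2*k+1) := pow_le_pow_left₀ (by positivity) hba _
    have h4 : a * b^(2*k*l+2*s+1) ≤ a * a^(2*k+1) :=
      mul_le_mul_of_nonneg_left ((h1.trans (h2 ▸ h3))) ha0
    have h5 : a * a^(2*k+1) = a^(2*k+2) := by rw [← pow_succ']
    nlinarith [mul_nonneg (hb0.trans hbδ) (pow_nonneg hb0 (2*k*l+2*l))]
  · have h1 : a * b^(2*k*l+2*s+1) ≤ b^l * b^(2*k*l+2*s+1) :=
      mul_le_mul_of_nonneg_right hab (by positivity)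
    have h2 : b^l * b^(2*k*l+2*s+1) = b^(l+(2*k*l+2*s+1)) := by rw [← pow_add]
    have h3 : b^(l+(2*k*l+2*s+1)) ≤ b^(2*k*l+2*l+1) := pow_le_pow_of_le_one hb0 hb1 (by omega)
    have h4 : b^(2*k*l+2*l+1) = b * b^(2*k*l+2*l) := by rw [← pow_succ']
    have h5 : b * b^(2*k*l+2*l) ≤ δ * b^(2*k*l+2*l) :=
      mul_le_mul_of_nonneg_right hbδ (by positivity)
    nlinarith [pow_nonneg ha0 (2*k+2)]

lemma Ed_identity (l k s : ℕ) (hl : 2 ≤ l) (hk : 1 ≤ k) (hs : 1 ≤ s) (γ m a b : ℝ) :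
    (l:ℝ) * (2 * a^1 * (b^(2*l-1) - a^(2*k+1)))
      + ((2*l : ℕ):ℝ) * b^(2*l-1) * (-a + m*b^(2*s+1))
      - γ * ((b^(2*l-1) - a^(2*k+1)) * b^(2*k*l+1)
          + ((2*k*l+1 : ℕ):ℝ) * a * b^(2*k*l+1-1) * (-a + m*b^(2*s+1)))
    = -2*(l:ℝ)*a^(2*k+2) + 2*(l:ℝ)*m*b^(2*l+2*s) - γ*b^(2*k*l+2*l)
      + γ*a^(2*k+1)*b^(2*k*l+1) + γ*((2*k*l+1 : ℕ):ℝ)*a^2*b^(2*k*l)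
      - γ*((2*k*l+1 : ℕ):ℝ)*m*a*b^(2*k*l+2*s+1) := by
  obtain ⟨l2, rfl⟩ : ∃ l2, l = l2 + 2 := ⟨l - 2, by omega⟩
  obtain ⟨k2, rfl⟩ : ∃ k2, k = k2 + 1 := ⟨k - 1, by omega⟩
  obtain ⟨s2, rfl⟩ : ∃ s2, s = s2 + 1 := ⟨s - 1, by omega⟩
  simp only [show 2*(l2+2)-1 = 2*l2+3 from by omega,
    show 2*(k2+1)+1 = 2*k2+3 from by omega,
    show 2*(k2+1)*(l2+2)+1-1 = 2*(k2+1)*(l2+2) from by omega,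
    show 2*(s2+1)+1 = 2*s2+3 from by omega,
    show 2*(k2+1)+2 = 2*k2+4 from by omega]
  push_cast
  ring

lemma hasDeriv_S (l k s : ℕ) (hl : 2 ≤ l) (hk : 1 ≤ k) (hs : 1 ≤ s) (m γ : ℝ)
    (x y : ℝ → ℝ) (t : ℝ)
    (hx : HasDerivWithinAt x (y t ^ (2*l-1) - x t ^ (2*k+1)) (Ici 0) t)
    (hy : HasDerivWithinAt y (-x t + m * y t ^ (2*s+1)) (Ici 0) t) :
    HasDerivWithinAt (fun u => (l:ℝ) * x u^2 + y u^(2*l) - γ * (x u * y u^(2*k*l+1)))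
      (-2*(l:ℝ)*(x t)^(2*k+2) + 2*(l:ℝ)*m*(y t)^(2*l+2*s) - γ*(y t)^(2*k*l+2*l)
        + γ*(x t)^(2*k+1)*(y t)^(2*k*l+1) + γ*((2*k*l+1 : ℕ):ℝ)*(x t)^2*(y t)^(2*k*l)
        - γ*((2*k*l+1 : ℕ):ℝ)*m*(x t)*(y t)^(2*k*l+2*s+1)) (Ici 0) t := by
  have h1 := (hx.pow 2).const_mul (l:ℝ)
  have h2 := hy.pow (2*l)
  have h3 := (hx.mul (hy.pow (2*k*l+1))).const_mul γ
  have H := (h1.add h2).sub h3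
  refine H.congr_deriv ?_
  rw [← Ed_identity l k s hl hk hs γ m (x t) (y t)]
  simp only [show (2:ℕ)-1 = 1 from rfl, Pi.pow_apply]
  push_cast
  ring

set_option maxHeartbeats 1000000 in
lemma key_ineq (l k s : ℕ) (hl : 2 ≤ l) (hk : 1 ≤ k) (hs : 1 ≤ s) (hls : l ≤ 2*s)
    (hskl : k*l < s) (m γ δ C : ℝ)
    (hC : C = 8 * (((2*k*l+1 : ℕ):ℝ)+1) * (|m|+2) * ((l:ℝ)+1))
    (hγ : γ = 1 / C^(k+1)) (hδ : δ = γ / C)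
    (a b : ℝ) (haδ : |a| ≤ δ) (hbδ : |b| ≤ δ) :
    -2*(l:ℝ)*a^(2*k+2) + 2*(l:ℝ)*m*b^(2*l+2*s) - γ*b^(2*k*l+2*l)
      + γ*a^(2*k+1)*b^(2*k*l+1) + γ*((2*k*l+1 : ℕ):ℝ)*a^2*b^(2*k*l)
      - γ*((2*k*l+1 : ℕ):ℝ)*m*a*b^(2*k*l+2*s+1)
    ≤ -(l:ℝ)*a^(2*k+2) - (γ/2)*b^(2*k*l+2*l) := by
  set Jr : ℝ := ((2*k*l+1 : ℕ):ℝ) with hJrdef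
  set am : ℝ := |m| with hamdef
  set A := |a| with hA
  set B := |b| with hB
  have hA0 : 0 ≤ A := abs_nonneg a
  have hB0 : 0 ≤ B := abs_nonneg b
  have hJr1 : 1 ≤ Jr := by rw [hJrdef]; exact_mod_cast Nat.one_le_iff_ne_zero.2 (by omega)
  have hm0 : 0 ≤ am := abs_nonneg m
  have hl2 : (2:ℝ) ≤ (l:ℝ) := by exact_mod_cast hl
  have hexp : C = 8*(Jr*(am*(l:ℝ))) + 8*(Jr*am) + 16*(Jr*(l:ℝ)) + 16*Jr
      + 8*(am*(l:ℝ)) + 8*am + 16*(l:ℝ) + 16 := by rw [hC]; ring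
  have p1 : 0 ≤ Jr*(am*(l:ℝ)) := by positivity
  have p2 : 0 ≤ Jr*am := by positivity
  have p3 : 0 ≤ Jr*(l:ℝ) := by positivity
  have p4 : 0 ≤ am*(l:ℝ) := by positivity
  have hC1 : 1 ≤ C := by linarith
  have hCpos : 0 < C := lt_of_lt_of_le one_pos hC1
  have h8C : 8 ≤ C := by linarith
  have hCk1 : C ≤ C^(k+1) := by
    calc C = C^1 := (pow_one C).symm
    _ ≤ C^(k+1) := pow_le_pow_right₀ hC1 (by omega)
  have hCkpos : 0 < C^(k+1) := by positivity
  have hγpos : 0 < γ := by rw [hγ]; positivity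
  have hγ1 : γ ≤ 1 := by rw [hγ, div_le_one hCkpos]; linarith
  have hγleC : γ ≤ 1/C := by
    rw [hγ]
    exact one_div_le_one_div_of_le hCpos hCk1
  have hδpos : 0 < δ := by rw [hδ]; positivity
  have hδC : δ * C = γ := by rw [hδ]; field_simp
  have hδleC : δ ≤ 1/C := by
    rw [hδ, div_le_div_iff₀ hCpos hCpos]
    linarith [mul_le_mul_of_nonneg_right hγ1 hCpos.le]
  have hδ8 : δ ≤ 1/8 := hδleC.trans (one_div_le_one_div_of_le (by norm_num) h8C)
  have hδ1 : δ ≤ 1 := hδ8.trans (by norm_num)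
  have hγC : γ * C^k = 1/C := by rw [hγ, pow_succ]; field_simp
  have c1 : γ*Jr*C^k ≤ 1/4 := by
    have e : γ*Jr*C^k = Jr * (1/C) := by rw [mul_comm γ Jr, mul_assoc, hγC]
    rw [e, mul_one_div, div_le_div_iff₀ hCpos (by norm_num)]
    linarith
  have hJrC8 : Jr * (1/C) ≤ 1/8 := by
    rw [mul_one_div, div_le_div_iff₀ hCpos (by norm_num)]
    linarith
  have c2 : γ*Jr*(1/C) ≤ γ/8 := by
    calc γ*Jr*(1/C) = γ*(Jr*(1/C)) := by ring
    _ ≤ γ*(1/8) := mul_le_mul_of_nonneg_left hJrC8 hγpos.le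
    _ = γ/8 := by ring
  have c3 : γ*δ ≤ 1/4 := by
    have h := mul_le_mul hγ1 hδ8 hδpos.le one_pos.le
    linarith
  have c3' : γ*δ ≤ γ/8 := by
    have h := mul_le_mul_of_nonneg_left hδ8 hγpos.le
    linarith
  have c5 : γ*Jr*am ≤ 1/4 := by
    have h1 : γ*(Jr*am) ≤ (1/C)*(Jr*am) := mul_le_mul_of_nonneg_right hγleC p2
    have h2 : (1/C)*(Jr*am) ≤ 1/4 := by
      rw [one_div_mul_eq_div, div_le_div_iff₀ hCpos (by norm_num)]
      linarith
    calc γ*Jr*am = γ*(Jr*am) := by ring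
    _ ≤ 1/4 := h1.trans h2
  have c6 : γ*Jr*am*δ ≤ γ/8 := by
    have h1 : Jr*am*δ ≤ (Jr*am)*(1/C) := mul_le_mul_of_nonneg_left hδleC p2
    have h2 : (Jr*am)*(1/C) ≤ 1/8 := by
      rw [mul_one_div, div_le_div_iff₀ hCpos (by norm_num)]
      linarith
    calc γ*Jr*am*δ = γ*(Jr*am*δ) := by ring
    _ ≤ γ*(1/8) := mul_le_mul_of_nonneg_left (h1.trans h2) hγpos.le
    _ = γ/8 := by ring
  have c4 : 2*(l:ℝ)*am*δ^2 ≤ γ/8 := by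
    have hCml : 8*(am*(l:ℝ)) ≤ C := by linarith
    have h16 : 16*(am*(l:ℝ)) ≤ C*C := by
      have h := mul_le_mul hCml (by linarith : (2:ℝ) ≤ C) (by norm_num) hCpos.le
      linarith
    have e1 : 2*(l:ℝ)*am*δ ≤ 2*(l:ℝ)*am*(1/C) := by
      apply mul_le_mul_of_nonneg_left hδleC (by positivity)
    have e2 : 2*(l:ℝ)*am*(1/C) ≤ C/8 := by
      rw [mul_one_div, div_le_div_iff₀ hCpos (by norm_num)]
      linarith [h16]
    have e3 : (2*(l:ℝ)*am*δ)*δ ≤ (C/8)*δ :=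
      mul_le_mul_of_nonneg_right (e1.trans e2) hδpos.le
    calc 2*(l:ℝ)*am*δ^2 = (2*(l:ℝ)*am*δ)*δ := by ring
    _ ≤ (C/8)*δ := e3
    _ = γ/8 := by rw [← hδC]; ring
  have ea2 : a^2 = A^2 := (sq_abs a).symm
  have eaK : a^(2*k+2) = A^(2*k+2) := by
    rw [hA, pow_abs, abs_of_nonneg (Even.pow_nonneg ⟨k+1, by ring⟩ a)]
  have ebN : b^(2*k*l+2*l) = B^(2*k*l+2*l) := by
    rw [hB, pow_abs, abs_of_nonneg (Even.pow_nonneg ⟨k*l+l, by ring⟩ b)]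
  have ebkl : b^(2*k*l) = B^(2*k*l) := by
    rw [hB, pow_abs, abs_of_nonneg (Even.pow_nonneg ⟨k*l, by ring⟩ b)]
  have ebls : b^(2*l+2*s) = B^(2*l+2*s) := by
    rw [hB, pow_abs, abs_of_nonneg (Even.pow_nonneg ⟨l+s, by ring⟩ b)]
  have t2 : γ*a^(2*k+1)*b^(2*k*l+1) ≤ γ*(A^(2*k+1)*B^(2*k*l+1)) := by
    have h1 : a^(2*k+1)*b^(2*k*l+1) ≤ A^(2*k+1)*B^(2*k*l+1) := by
      calc a^(2*k+1)*b^(2*k*l+1) ≤ |a^(2*k+1)*b^(2*k*l+1)| := le_abs_self _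
      _ = A^(2*k+1)*B^(2*k*l+1) := by rw [abs_mul, hA, hB, pow_abs, pow_abs]
    calc γ*a^(2*k+1)*b^(2*k*l+1) = γ*(a^(2*k+1)*b^(2*k*l+1)) := by ring
    _ ≤ γ*(A^(2*k+1)*B^(2*k*l+1)) := mul_le_mul_of_nonneg_left h1 hγpos.le
  have t3 : 2*(l:ℝ)*m*b^(2*l+2*s) ≤ 2*(l:ℝ)*am*B^(2*l+2*s) := by
    rw [ebls]
    have h1 : 2*(l:ℝ)*m ≤ 2*(l:ℝ)*am :=
      mul_le_mul_of_nonneg_left (le_abs_self m) (by positivity)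
    exact mul_le_mul_of_nonneg_right h1 (pow_nonneg hB0 _)
  have t4 : -(γ*Jr*m*a*b^(2*k*l+2*s+1)) ≤ γ*Jr*am*(A*B^(2*k*l+2*s+1)) := by
    have h1 : |γ*Jr*m*a*b^(2*k*l+2*s+1)| = γ*Jr*am*(A*B^(2*k*l+2*s+1)) := by
      rw [abs_mul, abs_mul, abs_mul, abs_mul, abs_pow,
        abs_of_nonneg hγpos.le, abs_of_nonneg (by linarith : (0:ℝ) ≤ Jr), hamdef, hA, hB]
      ring
    calc -(γ*Jr*m*a*b^(2*k*l+2*s+1)) ≤ |γ*Jr*m*a*b^(2*k*l+2*s+1)| := neg_le_abs _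
    _ = _ := h1
  have paK : (0:ℝ) ≤ A^(2*k+2) := pow_nonneg hA0 _
  have pbN : (0:ℝ) ≤ B^(2*k*l+2*l) := pow_nonneg hB0 _
  have ch1 : γ*Jr*(A^2*B^(2*k*l)) ≤ (1/4)*A^(2*k+2) + (γ/8)*B^(2*k*l+2*l) := by
    have h := termB1 k l A B C hA0 hB0 hCpos
    calc γ*Jr*(A^2*B^(2*k*l)) ≤ γ*Jr*(C^k*A^(2*k+2) + (1/C)*B^(2*k*l+2*l)) := by
          apply mul_le_mul_of_nonneg_left h (by positivity)
    _ = (γ*Jr*C^k)*A^(2*k+2) + (γ*Jr*(1/C))*B^(2*k*l+2*l) := by ring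
    _ ≤ (1/4)*A^(2*k+2) + (γ/8)*B^(2*k*l+2*l) :=
        add_le_add (mul_le_mul_of_nonneg_right c1 paK) (mul_le_mul_of_nonneg_right c2 pbN)
  have ch2 : γ*(A^(2*k+1)*B^(2*k*l+1)) ≤ (1/4)*A^(2*k+2) + (γ/8)*B^(2*k*l+2*l) := by
    have h := termB2 k l hk A B δ hA0 hB0 haδ hbδ hδ1
    calc γ*(A^(2*k+1)*B^(2*k*l+1)) ≤ γ*(δ*A^(2*k+2) + δ*B^(2*k*l+2*l)) :=
          mul_le_mul_of_nonneg_left h hγpos.le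
    _ = (γ*δ)*A^(2*k+2) + (γ*δ)*B^(2*k*l+2*l) := by ring
    _ ≤ (1/4)*A^(2*k+2) + (γ/8)*B^(2*k*l+2*l) :=
        add_le_add (mul_le_mul_of_nonneg_right c3 paK) (mul_le_mul_of_nonneg_right c3' pbN)
  have ch3 : 2*(l:ℝ)*am*B^(2*l+2*s) ≤ (γ/8)*B^(2*k*l+2*l) := by
    have h := termB3 k l s hskl B δ hB0 hbδ hδ1
    calc 2*(l:ℝ)*am*B^(2*l+2*s) ≤ 2*(l:ℝ)*am*(δ^2*B^(2*k*l+2*l)) :=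
          mul_le_mul_of_nonneg_left h (by positivity)
    _ = (2*(l:ℝ)*am*δ^2)*B^(2*k*l+2*l) := by ring
    _ ≤ (γ/8)*B^(2*k*l+2*l) := mul_le_mul_of_nonneg_right c4 pbN
  have ch4 : γ*Jr*am*(A*B^(2*k*l+2*s+1)) ≤ (1/4)*A^(2*k+2) + (γ/8)*B^(2*k*l+2*l) := by
    have h := termB4 k l s hk hl hls A B δ hA0 hB0 haδ hbδ hδ1
    calc γ*Jr*am*(A*B^(2*k*l+2*s+1)) ≤ γ*Jr*am*(A^(2*k+2) + δ*B^(2*k*l+2*l)) := by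
          apply mul_le_mul_of_nonneg_left h (by positivity)
    _ = (γ*Jr*am)*A^(2*k+2) + (γ*Jr*am*δ)*B^(2*k*l+2*l) := by ring
    _ ≤ (1/4)*A^(2*k+2) + (γ/8)*B^(2*k*l+2*l) :=
        add_le_add (mul_le_mul_of_nonneg_right c5 paK) (mul_le_mul_of_nonneg_right c6 pbN)
  have hlA : (3/4:ℝ)*A^(2*k+2) ≤ (l:ℝ)*A^(2*k+2) :=
    mul_le_mul_of_nonneg_right (by linarith) paK
  rw [eaK, ebN, ebkl, ea2]
  linarith [t2, t3, t4, ch1, ch2, ch3, ch4, hlA]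

end OAuxAttr
open OAuxAttr in
set_option maxHeartbeats 2000000 in
/-- Theorem 1.2 (ii): when s > kl, the origin is always an attractor. -/
theorem origin_attractor_s_gt_kl (l k s : ℕ) (hl : 2 ≤ l) (hk : 1 ≤ k) (hs : 1 ≤ s)
    (hls : l ≤ 2 * s) (hskl : k * l < s) (m : ℝ) :
    OriginAttractor l k s m := by
  classical
  have hl2 : (2:ℝ) ≤ (l:ℝ) := by exact_mod_cast hl
  set C : ℝ := 8 * (((2*k*l+1 : ℕ):ℝ)+1) * (|m|+2) * ((l:ℝ)+1) with hCdef
  have hJr1 : 1 ≤ ((2*k*l+1 : ℕ):ℝ) := by exact_mod_cast Nat.one_le_iff_ne_zero.2 (by omega)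
  have hm0 : (0:ℝ) ≤ |m| := abs_nonneg m
  have hC1 : 1 ≤ C := by
    have hJ0 : (0:ℝ) ≤ ((2*k*l+1:ℕ):ℝ) := by linarith
    have hl0 : (0:ℝ) ≤ (l:ℝ) := by linarith
    have hexp : C = 8*((2*k*l+1:ℕ):ℝ)*|m| * (l:ℝ) + 8*((2*k*l+1:ℕ):ℝ)*|m|
        + 16*((2*k*l+1:ℕ):ℝ)*(l:ℝ) + 16*((2*k*l+1:ℕ):ℝ)
        + 8*|m| * (l:ℝ) + 8*|m| + 16*(l:ℝ) + 16 := by rw [hCdef]; ring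
    nlinarith [mul_nonneg (mul_nonneg hJ0 hm0) hl0, mul_nonneg hJ0 hm0,
      mul_nonneg hJ0 hl0, mul_nonneg hm0 hl0]
  have hCpos : 0 < C := lt_of_lt_of_le one_pos hC1
  set γ : ℝ := 1 / C^(k+1) with hγdef
  have hγpos : 0 < γ := by rw [hγdef]; positivity
  have hγ1 : γ ≤ 1 := by
    rw [hγdef, div_le_one (by positivity)]
    exact one_le_pow₀ hC1
  set δ : ℝ := γ / C with hδdef
  have hδpos : 0 < δ := by rw [hδdef]; positivity
  have hδ1 : δ ≤ 1 := by
    rw [hδdef, div_le_one hCpos]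
    linarith
  set ρ : ℝ := δ^(2*l)/2 with hρdef
  have hρpos : 0 < ρ := by rw [hρdef]; positivity
  have hlp1 : (0:ℝ) < (l:ℝ)+1 := by linarith
  set δ₀ : ℝ := min δ (min 1 (ρ / (2*((l:ℝ)+1)))) with hδ₀def
  have hδ₀pos : 0 < δ₀ := lt_min hδpos (lt_min one_pos (by positivity))
  have hδ₀δ : δ₀ ≤ δ := min_le_left _ _
  have hδ₀1 : δ₀ ≤ 1 := (min_le_right _ _).trans (min_le_left _ _)
  have hδ₀ρ : δ₀ ≤ ρ / (2*((l:ℝ)+1)) := (min_le_right _ _).trans (min_le_right _ _)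
  refine ⟨δ₀, hδ₀pos, ?_⟩
  intro x y sol hinit
  -- continuity of solutions
  have hxc : ContinuousOn x (Ici 0) := fun t ht => ((sol t ht).1.continuousWithinAt)
  have hyc : ContinuousOn y (Ici 0) := fun t ht => ((sol t ht).2.continuousWithinAt)
  -- Lyapunov function along the solution
  set S : ℝ → ℝ := fun t => (l:ℝ) * x t^2 + y t^(2*l) - γ * (x t * y t^(2*k*l+1)) with hSdef
  set E : ℝ → ℝ := fun t =>
    -2*(l:ℝ)*(x t)^(2*k+2) + 2*(l:ℝ)*m*(y t)^(2*l+2*s) - γ*(y t)^(2*k*l+2*l)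
      + γ*(x t)^(2*k+1)*(y t)^(2*k*l+1) + γ*((2*k*l+1 : ℕ):ℝ)*(x t)^2*(y t)^(2*k*l)
      - γ*((2*k*l+1 : ℕ):ℝ)*m*(x t)*(y t)^(2*k*l+2*s+1) with hEdef
  have hS : ∀ t ∈ Ici (0:ℝ), HasDerivWithinAt S (E t) (Ici 0) t := fun t ht =>
    hasDeriv_S l k s hl hk hs m γ x y t (sol t ht).1 (sol t ht).2
  have hEkey : ∀ t : ℝ, |x t| ≤ δ → |y t| ≤ δ →
      E t ≤ -(l:ℝ)*(x t)^(2*k+2) - (γ/2)*(y t)^(2*k*l+2*l) := fun t h1 h2 =>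
    key_ineq l k s hl hk hs hls hskl m γ δ C hCdef hγdef hδdef (x t) (y t) h1 h2
  clear_value C γ δ ρ δ₀ S E
  have hE0 : ∀ t : ℝ, |x t| ≤ δ → |y t| ≤ δ → E t ≤ 0 := by
    intro t h1 h2
    have h3 := hEkey t h1 h2
    have h4 : (0:ℝ) ≤ (x t)^(2*k+2) := Even.pow_nonneg ⟨k+1, by ring⟩ _
    have h5 : (0:ℝ) ≤ (y t)^(2*k*l+2*l) := Even.pow_nonneg ⟨k*l+l, by ring⟩ _
    have h6 : (0:ℝ) ≤ (l:ℝ)*(x t)^(2*k+2) := mul_nonneg (by linarith) h4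
    have h7 : (0:ℝ) ≤ (γ/2)*(y t)^(2*k*l+2*l) := mul_nonneg (by linarith) h5
    linarith
  -- cross-term bound for the Lyapunov function
  have habs : ∀ a b : ℝ, |a| ≤ 1 → |b| ≤ 1 → |a*b^(2*k*l+1)| ≤ (a^2 + b^(2*l))/2 := by
    intro a b ha hb
    have hJl : 2*l ≤ 2*(2*k*l+1) := by
      have h := Nat.le_mul_of_pos_left l hk
      have e : 2*k*l = 2*(k*l) := Nat.mul_assoc 2 k l
      omega
    have e1 : |a*b^(2*k*l+1)| = |a| *|b|^(2*k*l+1) := by rw [abs_mul, abs_pow]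
    have e2 : |a| *|b|^(2*k*l+1) ≤ (|a|^2 + (|b|^(2*k*l+1))^2)/2 := by
      nlinarith [sq_nonneg (|a| - |b|^(2*k*l+1))]
    have e3 : (|b|^(2*k*l+1))^2 = |b|^(2*(2*k*l+1)) := by rw [← pow_mul]; congr 1 <;> try ring
    have e4 : |b|^(2*(2*k*l+1)) ≤ |b|^(2*l) :=
      pow_le_pow_of_le_one (abs_nonneg b) hb hJl
    have e5 : |b|^(2*l) = b^(2*l) := by
      rw [pow_abs, abs_of_nonneg (Even.pow_nonneg ⟨l, by ring⟩ b)]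
    have e6 : |a|^2 = a^2 := sq_abs a
    rw [e1]; rw [e3] at e2; rw [e5] at e4
    linarith [e6.le, e6.ge]
  have hcross : ∀ a b : ℝ, |a| ≤ 1 → |b| ≤ 1 →
      γ*(a*b^(2*k*l+1)) ≤ (a^2 + b^(2*l))/2 ∧ -((a^2 + b^(2*l))/2) ≤ γ*(a*b^(2*k*l+1)) := by
    intro a b ha hb
    have h1 := habs a b ha hb
    have h2 : γ*(a*b^(2*k*l+1)) ≤ γ*|a*b^(2*k*l+1)| :=
      mul_le_mul_of_nonneg_left (le_abs_self _) hγpos.le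
    have h3 : γ*|a*b^(2*k*l+1)| ≤ |a*b^(2*k*l+1)| :=
      mul_le_of_le_one_left (abs_nonneg _) hγ1
    have h4 : -(γ*(a*b^(2*k*l+1))) ≤ γ*|a*b^(2*k*l+1)| := by
      rw [← mul_neg]
      exact mul_le_mul_of_nonneg_left (neg_le_abs _) hγpos.le
    constructor
    · linarith
    · linarith
  have hVlb : ∀ a b : ℝ, |a| ≤ 1 → |b| ≤ 1 →
      (a^2 + b^(2*l))/2 ≤ (l:ℝ)*a^2 + b^(2*l) - γ*(a*b^(2*k*l+1)) := by
    intro a b ha hb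
    have h2 := (hcross a b ha hb).1
    have h3 : a^2 ≤ (l:ℝ)*a^2 := by nlinarith [sq_nonneg a]
    have h4 : (0:ℝ) ≤ b^(2*l) := Even.pow_nonneg ⟨l, by ring⟩ b
    linarith
  have hVub : ∀ a b : ℝ, |a| ≤ 1 → |b| ≤ 1 →
      (l:ℝ)*a^2 + b^(2*l) - γ*(a*b^(2*k*l+1)) ≤ ((l:ℝ)+1)*(a^2 + b^2) := by
    intro a b ha hb
    have h2 := (hcross a b ha hb).2
    have h5 : b^(2*l) ≤ b^2 := by
      have e5 : |b|^(2*l) = b^(2*l) := by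
        rw [pow_abs, abs_of_nonneg (Even.pow_nonneg ⟨l, by ring⟩ b)]
      have := pow_le_pow_of_le_one (abs_nonneg b) hb (show 2 ≤ 2*l by omega)
      rw [e5, sq_abs] at this
      exact this
    have h6 : 2*b^2 ≤ (l:ℝ)*b^2 := by nlinarith [sq_nonneg b]
    have h7 : a^2 ≤ (l:ℝ)*a^2 := by nlinarith [sq_nonneg a]
    nlinarith [sq_nonneg a, sq_nonneg b]
  -- bridging to S
  have hSlb : ∀ t : ℝ, |x t| ≤ 1 → |y t| ≤ 1 → ((x t)^2 + (y t)^(2*l))/2 ≤ S t :=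
    fun t h1 h2 => by simp only [hSdef]; exact hVlb (x t) (y t) h1 h2
  have hSub : ∀ t : ℝ, |x t| ≤ 1 → |y t| ≤ 1 → S t ≤ ((l:ℝ)+1)*((x t)^2 + (y t)^2) :=
    fun t h1 h2 => by simp only [hSdef]; exact hVub (x t) (y t) h1 h2
  -- barrier property
  have hbar : ∀ t : ℝ, |x t| ≤ δ → |y t| ≤ δ → S t < ρ → |x t| < δ ∧ |y t| < δ := by
    intro t h1 h2 h3
    have hlb := hSlb t (h1.trans hδ1) (h2.trans hδ1)
    have hδ2l : δ^(2*l) ≤ δ^2 := pow_le_pow_of_le_one hδpos.le hδ1 (by omega)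
    have hx2 : (0:ℝ) ≤ (x t)^2 := sq_nonneg _
    have hy2l : (0:ℝ) ≤ (y t)^(2*l) := Even.pow_nonneg ⟨l, by ring⟩ _
    constructor
    · by_contra h
      push_neg at h
      have : δ^2 ≤ (x t)^2 := by
        have := pow_le_pow_left₀ hδpos.le h 2
        rwa [sq_abs] at this
      rw [hρdef] at h3
      linarith
    · by_contra h
      push_neg at h
      have : δ^(2*l) ≤ (y t)^(2*l) := by
        have := pow_le_pow_left₀ hδpos.le h (2*l)
        rwa [pow_abs, abs_of_nonneg hy2l] at this
      rw [hρdef] at h3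
      linarith
  -- initial conditions
  have h0x : |x 0| < δ₀ := by
    by_contra h
    push_neg at h
    nlinarith [mul_le_mul h h hδ₀pos.le (abs_nonneg (x 0)), sq_abs (x 0), sq_nonneg (y 0)]
  have h0y : |y 0| < δ₀ := by
    by_contra h
    push_neg at h
    nlinarith [mul_le_mul h h hδ₀pos.le (abs_nonneg (y 0)), sq_abs (y 0), sq_nonneg (x 0)]
  have h0S : S 0 < ρ/2 := by
    have h1 := hSub 0 ((h0x.le).trans hδ₀1) ((h0y.le).trans hδ₀1)
    have h2 : ((l:ℝ)+1)*((x 0)^2 + (y 0)^2) < ((l:ℝ)+1)*δ₀^2 :=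
      mul_lt_mul_of_pos_left hinit hlp1
    have h3 : δ₀^2 ≤ ρ/(2*((l:ℝ)+1)) := by
      have := mul_le_mul hδ₀1 hδ₀ρ hδ₀pos.le zero_le_one
      calc δ₀^2 = δ₀*δ₀ := sq δ₀
      _ ≤ 1*(ρ/(2*((l:ℝ)+1))) := this
      _ = ρ/(2*((l:ℝ)+1)) := one_mul _
    have h4 : ((l:ℝ)+1)*δ₀^2 ≤ ρ/2 := by
      have := mul_le_mul_of_nonneg_left h3 hlp1.le
      calc ((l:ℝ)+1)*δ₀^2 ≤ ((l:ℝ)+1)*(ρ/(2*((l:ℝ)+1))) := this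
      _ = ρ/2 := by field_simp
    linarith
  -- monotonicity helper
  have monoS : ∀ T, 0 ≤ T → (∀ u, 0 ≤ u → u < T → |x u| ≤ δ ∧ |y u| ≤ δ) →
      AntitoneOn S (Icc 0 T) := by
    intro T hT hbox
    apply antitoneOn_aux hS
    intro t ht
    exact hE0 t (hbox t ht.1.le ht.2).1 (hbox t ht.1.le ht.2).2
  -- trapping: the solution stays in the box forever
  have box : ∀ t, 0 ≤ t → |x t| < δ ∧ |y t| < δ := by
    by_contra hcon
    push_neg at hcon
    obtain ⟨t₁, ht₁0, ht₁⟩ := hcon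
    set Bad : Set ℝ := {t | 0 ≤ t ∧ (δ ≤ |x t| ∨ δ ≤ |y t|)} with hBaddef
    have hne : Bad.Nonempty := by
      refine ⟨t₁, ht₁0, ?_⟩
      by_cases hxx : δ ≤ |x t₁|
      · exact Or.inl hxx
      · exact Or.inr (ht₁ (not_le.1 hxx))
    have hBddB : BddBelow Bad := ⟨0, fun u hu => hu.1⟩
    have hclosed : IsClosed Bad := by
      have heq : Bad = (Ici 0) ∩ (fun t => (x t, y t)) ⁻¹' {p : ℝ×ℝ | δ ≤ |p.1| ∨ δ ≤ |p.2|} := by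
        ext t
        simp [hBaddef, Set.mem_inter_iff, Set.mem_preimage, Set.mem_setOf_eq, Set.mem_Ici]
      rw [heq]
      apply ContinuousOn.preimage_isClosed_of_isClosed (hxc.prodMk hyc) isClosed_Ici
      apply IsClosed.union
      · exact isClosed_le continuous_const continuous_fst.abs
      · exact isClosed_le continuous_const continuous_snd.abs
    set T := sInf Bad with hTdef
    have hTmem : T ∈ Bad := hclosed.csInf_mem hne hBddB
    have hT0 : 0 ≤ T := hTmem.1
    have hpre : ∀ u, 0 ≤ u → u < T → |x u| < δ ∧ |y u| < δ := by
      intro u hu huT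
      by_contra h
      rw [not_and_or, not_lt, not_lt] at h
      exact absurd (csInf_le hBddB ⟨hu, h⟩) (not_le.2 huT)
    have hTne : T ≠ 0 := by
      intro h
      have h2 := hTmem.2
      rw [h] at h2
      rcases h2 with h2 | h2
      · exact absurd h2 (not_le.2 (h0x.trans_le hδ₀δ))
      · exact absurd h2 (not_le.2 (h0y.trans_le hδ₀δ))
    have hTpos : 0 < T := lt_of_le_of_ne hT0 (Ne.symm hTne)
    have hTcl : T ∈ closure (Ico 0 T) := by
      rw [closure_Ico hTpos.ne]
      exact right_mem_Icc.2 hTpos.le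
    haveI hNB : (𝓝[Ico 0 T] T).NeBot := mem_closure_iff_nhdsWithin_neBot.1 hTcl
    have hlim : ∀ f : ℝ → ℝ, ContinuousOn f (Ici 0) →
        (∀ u, 0 ≤ u → u < T → |f u| < δ) → |f T| ≤ δ := by
      intro f hf hfu
      have hcw : ContinuousWithinAt f (Ico 0 T) T :=
        (hf T hT0).mono (fun u hu => hu.1)
      apply le_of_tendsto hcw.tendsto.abs
      exact eventually_mem_nhdsWithin.mono (fun u hu => (hfu u hu.1 hu.2).le)
    have hxT : |x T| ≤ δ := hlim x hxc (fun u h1 h2 => (hpre u h1 h2).1)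
    have hyT : |y T| ≤ δ := hlim y hyc (fun u h1 h2 => (hpre u h1 h2).2)
    have hST : S T ≤ S 0 := by
      have hanti := monoS T hT0 (fun u hu huT => ⟨(hpre u hu huT).1.le, (hpre u hu huT).2.le⟩)
      exact hanti ⟨le_rfl, hT0⟩ ⟨hT0, le_rfl⟩ hT0
    have hSTρ : S T < ρ := lt_of_le_of_lt hST (h0S.trans (by linarith))
    obtain ⟨hb1, hb2⟩ := hbar T hxT hyT hSTρ
    rcases hTmem.2 with h | h
    · exact absurd h (not_le.2 hb1)
    · exact absurd h (not_le.2 hb2)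
  -- global consequences
  have boxw : ∀ u, 0 ≤ u → |x u| ≤ δ ∧ |y u| ≤ δ :=
    fun u hu => ⟨(box u hu).1.le, (box u hu).2.le⟩
  have hSanti : ∀ u v, 0 ≤ u → u ≤ v → S v ≤ S u := by
    intro u v hu huv
    have hanti := monoS v (hu.trans huv) (fun w hw _ => boxw w hw)
    exact hanti ⟨hu, huv⟩ ⟨hu.trans huv, le_rfl⟩ huv
  have hSnn : ∀ t, 0 ≤ t → 0 ≤ S t := by
    intro t ht
    have h1 := hSlb t ((boxw t ht).1.trans hδ1) ((boxw t ht).2.trans hδ1)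
    have h2 : (0:ℝ) ≤ (x t)^2 := sq_nonneg _
    have h3 : (0:ℝ) ≤ (y t)^(2*l) := Even.pow_nonneg ⟨l, by ring⟩ _
    linarith
  -- decay of S to 0
  have decay : ∀ β, 0 < β → ∃ t₀, 0 ≤ t₀ ∧ S t₀ < β := by
    intro β hβ
    by_contra hno
    push_neg at hno
    set c : ℝ := β/(2*((l:ℝ)+1)) with hcdef
    have hcpos : 0 < c := by rw [hcdef]; exact div_pos hβ (by positivity)
    have hsq : ∀ t, 0 ≤ t → c ≤ (x t)^2 ∨ c ≤ (y t)^2 := by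
      intro t ht
      by_contra h
      rw [not_or, not_le, not_le] at h
      have h1 : β ≤ S t := hno t ht
      have h2 := hSub t ((boxw t ht).1.trans hδ1) ((boxw t ht).2.trans hδ1)
      have h3 : ((l:ℝ)+1)*((x t)^2 + (y t)^2) < ((l:ℝ)+1)*(2*c) := by
        apply mul_lt_mul_of_pos_left _ hlp1
        linarith [h.1, h.2]
      have h4 : ((l:ℝ)+1)*(2*c) = β := by rw [hcdef]; field_simp
      linarith
    set ε : ℝ := min ((l:ℝ)*c^(k+1)) ((γ/2)*c^(k*l+l)) with hεdef
    have hεpos : 0 < ε := lt_min (mul_pos (by linarith : (0:ℝ) < (l:ℝ)) (pow_pos hcpos _))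
      (mul_pos (by linarith : (0:ℝ) < γ/2) (pow_pos hcpos _))
    have hEε : ∀ t, 0 ≤ t → E t ≤ -ε := by
      intro t ht
      have hkey := hEkey t (boxw t ht).1 (boxw t ht).2
      rcases hsq t ht with h | h
      · have e1 : c^(k+1) ≤ ((x t)^2)^(k+1) := pow_le_pow_left₀ hcpos.le h (k+1)
        have e2 : ((x t)^2)^(k+1) = (x t)^(2*k+2) := by rw [← pow_mul]; congr 1 <;> try ring
        have e3 : (0:ℝ) ≤ (y t)^(2*k*l+2*l) := Even.pow_nonneg ⟨k*l+l, by ring⟩ _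
        have e4 : (l:ℝ)*c^(k+1) ≤ (l:ℝ)*(x t)^(2*k+2) := by
          rw [← e2]
          exact mul_le_mul_of_nonneg_left e1 (by linarith)
        have e5 : ε ≤ (l:ℝ)*c^(k+1) := min_le_left _ _
        nlinarith [mul_nonneg (by linarith : (0:ℝ) ≤ γ/2) e3]
      · have e1 : c^(k*l+l) ≤ ((y t)^2)^(k*l+l) := pow_le_pow_left₀ hcpos.le h (k*l+l)
        have e2 : ((y t)^2)^(k*l+l) = (y t)^(2*k*l+2*l) := by rw [← pow_mul]; congr 1 <;> try ring
        have e3 : (0:ℝ) ≤ (x t)^(2*k+2) := Even.pow_nonneg ⟨k+1, by ring⟩ _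
        have e4 : (γ/2)*c^(k*l+l) ≤ (γ/2)*(y t)^(2*k*l+2*l) := by
          rw [← e2]
          exact mul_le_mul_of_nonneg_left e1 (by linarith)
        have e5 : ε ≤ (γ/2)*c^(k*l+l) := min_le_right _ _
        nlinarith [mul_nonneg (by linarith : (0:ℝ) ≤ (l:ℝ)) e3]
    have hdec : ∀ T, 0 ≤ T → S T + ε*T ≤ S 0 := by
      intro T hT
      have hf : ∀ t ∈ Ici (0:ℝ), HasDerivWithinAt (fun u => S u + ε*u) (E t + ε) (Ici 0) t := by
        intro t ht
        exact (hS t ht).add (by simpa using (hasDerivWithinAt_id t (Ici 0)).const_mul ε)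
      have hF : ∀ t ∈ Ioo (0:ℝ) T, E t + ε ≤ 0 := fun t ht => by
        linarith [hEε t ht.1.le]
      have hanti := antitoneOn_aux hf hF
      have := hanti ⟨le_rfl, hT⟩ ⟨hT, le_rfl⟩ hT
      simpa using this
    set T := (S 0 + 1)/ε with hTdef2
    have hT0 : 0 ≤ T := div_nonneg (by linarith [hSnn 0 le_rfl]) hεpos.le
    have h1 := hdec T hT0
    have h2 : ε*T = S 0 + 1 := by
      rw [hTdef2, mul_div_cancel₀ _ hεpos.ne']
    have h3 := hSnn T hT0
    linarith
  -- convergence to zero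
  have final : ∀ η, 0 < η → ∃ t₀ : ℝ, ∀ t ≥ t₀, |x t| < η ∧ |y t| < η := by
    intro η hη
    set η' : ℝ := min η δ with hη'def
    have hη'pos : 0 < η' := lt_min hη hδpos
    have hη'1 : η' ≤ 1 := (min_le_right _ _).trans hδ1
    set β : ℝ := η'^(2*l)/2 with hβdef
    have hβpos : 0 < β := by
      rw [hβdef]; exact div_pos (pow_pos hη'pos _) two_pos
    obtain ⟨t₀, ht₀0, ht₀⟩ := decay β hβpos
    refine ⟨t₀, fun t ht => ?_⟩
    have h0t : 0 ≤ t := le_trans ht₀0 ht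
    have hSt : S t < β := lt_of_le_of_lt (hSanti t₀ t ht₀0 ht) ht₀
    have hlb := hSlb t ((boxw t h0t).1.trans hδ1) ((boxw t h0t).2.trans hδ1)
    have hy2l : (0:ℝ) ≤ (y t)^(2*l) := Even.pow_nonneg ⟨l, by ring⟩ _
    have hx2 : (0:ℝ) ≤ (x t)^2 := sq_nonneg _
    have hη2l : η'^(2*l) ≤ η'^2 := pow_le_pow_of_le_one hη'pos.le hη'1 (by omega)
    constructor
    · by_contra h
      push_neg at h
      have hxη : η' ≤ |x t| := (min_le_left _ _).trans h
      have : η'^2 ≤ (x t)^2 := by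
        have := pow_le_pow_left₀ hη'pos.le hxη 2
        rwa [sq_abs] at this
      rw [hβdef] at hSt
      linarith
    · by_contra h
      push_neg at h
      have hyη : η' ≤ |y t| := (min_le_left _ _).trans h
      have : η'^(2*l) ≤ (y t)^(2*l) := by
        have := pow_le_pow_left₀ hη'pos.le hyη (2*l)
        rwa [pow_abs, abs_of_nonneg hy2l] at this
      rw [hβdef] at hSt
      linarith
  have htx : Tendsto x atTop (𝓝 0) := by
    rw [Metric.tendsto_atTop]
    intro η hη
    obtain ⟨t₀, ht₀⟩ := final η hη
    exact ⟨t₀, fun t htt => by rw [Real.dist_eq, sub_zero]; exact (ht₀ t htt).1⟩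
  have hty : Tendsto y atTop (𝓝 0) := by
    rw [Metric.tendsto_atTop]
    intro η hη
    obtain ⟨t₀, ht₀⟩ := final η hη
    exact ⟨t₀, fun t htt => by rw [Real.dist_eq, sub_zero]; exact (ht₀ t htt).2⟩
  exact htx.prodMk_nhds hty
end

section
/- Let i and j be natural numbers such that i is odd or j is odd. Then ∫_0^Ω Sn(θ)^i · Cs(θ)^j dθ = 0. -/
open intervalIntegral

/-- The period Ω of the generalized trigonometric functions with p = 1, q = l. -/
noncomputable def Omega (l : ℕ) : ℝ :=
  2 * (l : ℝ) ^ (-(1 / 2 : ℝ)) * Real.Gamma (1 / 2) * Real.Gamma (1 / (2 * (l : ℝ))) /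
    Real.Gamma (1 / 2 + 1 / (2 * (l : ℝ)))

section AuxLemmas

open Set MeasureTheory Metric NNReal Real

set_option linter.unusedSectionVars false
set_option linter.unusedVariables false


lemma abs_pow_sub_pow_le' (a b : ℝ) (ha : |a| ≤ 1) (hb : |b| ≤ 1) (n : ℕ) :
    |a ^ n - b ^ n| ≤ n * |a - b| := by
  induction n with
  | zero => simp
  | succ k ih =>
    have h : a ^ (k+1) - b ^ (k+1) = a ^ k * (a - b) + b * (a ^ k - b ^ k) := by ring
    have h1 : |a ^ k * (a - b)| ≤ |a - b| := by
      rw [abs_mul, abs_pow]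
      calc |a|^k * |a - b| ≤ 1 * |a-b| := by
            apply mul_le_mul_of_nonneg_right (pow_le_one₀ (abs_nonneg a) ha) (abs_nonneg _)
        _ = |a - b| := one_mul _
    have h2 : |b * (a ^ k - b ^ k)| ≤ k * |a - b| := by
      rw [abs_mul]
      calc |b| * |a^k - b^k| ≤ 1 * (k * |a-b|) := by
            apply mul_le_mul hb ih (abs_nonneg _) zero_le_one
        _ = k * |a-b| := one_mul _
    calc |a ^ (k+1) - b ^ (k+1)| ≤ |a ^ k * (a - b)| + |b * (a ^ k - b ^ k)| := by
          rw [h]; exact abs_add_le _ _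
      _ ≤ |a - b| + k * |a-b| := add_le_add h1 h2
      _ = (k+1 : ℕ) * |a - b| := by push_cast; ring

lemma lipschitz_field (n : ℕ) (hn : 1 ≤ n) :
    ∀ t : ℝ, LipschitzOnWith (n : ℝ≥0)
      (fun p : ℝ × ℝ => ((-p.2, p.1 ^ n) : ℝ × ℝ)) (closedBall (0 : ℝ × ℝ) 1) := by
  intro t
  rw [lipschitzOnWith_iff_norm_sub_le]
  intro p hp q hq
  have hp1 : |p.1| ≤ 1 := by
    have := norm_fst_le p
    simpa [Real.norm_eq_abs] using this.trans (mem_closedBall_zero_iff.mp hp)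
  have hq1 : |q.1| ≤ 1 := by
    have := norm_fst_le q
    simpa [Real.norm_eq_abs] using this.trans (mem_closedBall_zero_iff.mp hq)
  have hnorm : ‖p - q‖ = max |p.1 - q.1| |p.2 - q.2| := by
    simp [Prod.norm_def, Real.norm_eq_abs]
  have hcast : ((n : ℝ≥0) : ℝ) = (n : ℝ) := by norm_cast
  have hn1 : (1:ℝ) ≤ (n:ℝ) := by exact_mod_cast hn
  rw [Prod.norm_def]
  apply max_le <;> rw [hcast]
  · calc ‖(-p.2) - (-q.2)‖ = |p.2 - q.2| := by
          rw [Real.norm_eq_abs, neg_sub_neg, abs_sub_comm]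
      _ ≤ max |p.1 - q.1| |p.2 - q.2| := le_max_right _ _
      _ ≤ n * ‖p - q‖ := by
          rw [hnorm]
          nlinarith [le_max_right |p.1 - q.1| |p.2 - q.2|, abs_nonneg (p.1-q.1), abs_nonneg (p.2-q.2)]
  · calc ‖p.1 ^ n - q.1 ^ n‖ = |p.1 ^ n - q.1 ^ n| := Real.norm_eq_abs _
      _ ≤ n * |p.1 - q.1| := abs_pow_sub_pow_le' _ _ hp1 hq1 n
      _ ≤ n * ‖p - q‖ := by
          rw [hnorm]
          have := le_max_left |p.1 - q.1| |p.2 - q.2|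
          nlinarith [Nat.cast_nonneg (α := ℝ) n]

lemma ode_unique (n : ℕ) (hn : 1 ≤ n) (f g : ℝ → ℝ × ℝ)
    (hf : ∀ t, HasDerivAt f (-(f t).2, (f t).1 ^ n) t)
    (hg : ∀ t, HasDerivAt g (-(g t).2, (g t).1 ^ n) t)
    (hfb : ∀ t, f t ∈ closedBall (0 : ℝ × ℝ) 1)
    (hgb : ∀ t, g t ∈ closedBall (0 : ℝ × ℝ) 1)
    (t₀ : ℝ) (heq : f t₀ = g t₀) : f = g := by
  funext t
  rcases eq_or_ne t t₀ with rfl | hne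
  · exact heq
  have h : t ∈ Ioo (min t₀ t - 1) (max t₀ t + 1) := by
    constructor
    · have := min_le_right t₀ t; linarith
    · have := le_max_right t₀ t; linarith
  have ht₀ : t₀ ∈ Ioo (min t₀ t - 1) (max t₀ t + 1) := by
    constructor
    · have := min_le_left t₀ t; linarith
    · have := le_max_left t₀ t; linarith
  exact ODE_solution_unique_of_mem_Ioo (fun s _ => lipschitz_field n hn s) ht₀
    (fun s _ => ⟨hf s, hfb s⟩) (fun s _ => ⟨hg s, hgb s⟩) heq h

lemma ofReal_beta_integrand (u v : ℝ) (x : ℝ) (hx0 : 0 ≤ x) (hx1 : x ≤ 1) :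
    (x : ℂ) ^ ((u : ℂ) - 1) * ((1 : ℂ) - (x : ℂ)) ^ ((v : ℂ) - 1) =
      ((x ^ (u - 1) * (1 - x) ^ (v - 1) : ℝ) : ℂ) := by
  rw [Complex.ofReal_mul, Complex.ofReal_cpow hx0, Complex.ofReal_cpow (by linarith : (0:ℝ) ≤ 1 - x)]
  push_cast
  ring

lemma betaIntegrand_integrableOn (u v : ℝ) (hu : 0 < u) (hv : 0 < v) :
    IntegrableOn (fun t : ℝ => t ^ (u - 1) * (1 - t) ^ (v - 1)) (Icc (0:ℝ) 1) := by
  have hc := Complex.betaIntegral_convergent (u := (u:ℂ)) (v := (v:ℂ))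
    (by simpa using hu) (by simpa using hv)
  rw [intervalIntegrable_iff_integrableOn_Ioc_of_le zero_le_one] at hc
  have hre : IntegrableOn (fun x : ℝ => ((x : ℂ) ^ ((u:ℂ)-1) * ((1:ℂ)-(x:ℂ)) ^ ((v:ℂ)-1)).re)
      (Ioc (0:ℝ) 1) := hc.re
  rw [integrableOn_Icc_iff_integrableOn_Ioc]
  apply hre.congr_fun _ measurableSet_Ioc
  intro x hx
  have h := ofReal_beta_integrand u v x hx.1.le hx.2
  dsimp only
  rw [h, Complex.ofReal_re]

lemma betaReal (u v : ℝ) (hu : 0 < u) (hv : 0 < v) :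
    ∫ t in (0:ℝ)..1, t ^ (u - 1) * (1 - t) ^ (v - 1) =
      Real.Gamma u * Real.Gamma v / Real.Gamma (u + v) := by
  have h1 : Complex.betaIntegral (u:ℂ) (v:ℂ) =
      ((∫ t in (0:ℝ)..1, t ^ (u - 1) * (1 - t) ^ (v - 1) : ℝ) : ℂ) := by
    rw [Complex.betaIntegral, ← intervalIntegral.integral_ofReal]
    apply intervalIntegral.integral_congr
    intro x hx
    rw [uIcc_of_le zero_le_one] at hx
    exact ofReal_beta_integrand u v x hx.1 hx.2
  have h2 := Complex.Gamma_mul_Gamma_eq_betaIntegral (s := (u:ℂ)) (t := (v:ℂ))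
    (by simpa using hu) (by simpa using hv)
  have hGuv : Complex.Gamma ((u:ℂ) + (v:ℂ)) = ((Real.Gamma (u + v) : ℝ) : ℂ) := by
    rw [← Complex.ofReal_add, Complex.Gamma_ofReal]
  have hGuv_ne : Real.Gamma (u + v) ≠ 0 := (Real.Gamma_pos_of_pos (by linarith)).ne'
  rw [h1, hGuv, Complex.Gamma_ofReal, Complex.Gamma_ofReal] at h2
  have : ((Real.Gamma u * Real.Gamma v : ℝ) : ℂ) =
      ((Real.Gamma (u+v) * ∫ t in (0:ℝ)..1, t ^ (u - 1) * (1 - t) ^ (v - 1) : ℝ) : ℂ) := by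
    push_cast
    exact h2
  rw [Complex.ofReal_inj] at this
  field_simp
  linarith [this]

noncomputable def Jf (l : ℕ) : ℝ → ℝ := fun c => (1 - c ^ (2 * l)) ^ (-(1/2) : ℝ)

lemma Jf_contOn (l : ℕ) (hl : 1 ≤ l) : ContinuousOn (Jf l) (Ioo (-1:ℝ) 1) := by
  intro x hx
  apply ContinuousAt.continuousWithinAt
  have hbase : (0:ℝ) < 1 - x ^ (2*l) := by
    have h1 : |x| < 1 := abs_lt.mpr ⟨hx.1, hx.2⟩
    have h0 : |x| ^ (2*l) < 1 := pow_lt_one₀ (abs_nonneg x) h1 (by omega)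
    have h2 : x ^ (2*l) ≤ |x ^ (2*l)| := le_abs_self _
    rw [abs_pow] at h2
    linarith
  have hcont : ContinuousAt (fun c : ℝ => 1 - c ^ (2*l)) x := by fun_prop
  exact ContinuousAt.comp (x := x) (g := fun y : ℝ => y ^ (-(1/2):ℝ))
    (Real.continuousAt_rpow_const _ _ (Or.inl hbase.ne')) hcont

lemma Jf_integrableOn (l : ℕ) (hl : 1 ≤ l) : IntegrableOn (Jf l) (Icc (0:ℝ) 1) := by
  rw [integrableOn_Icc_iff_integrableOn_Ioc]
  have hmaj : IntervalIntegrable (fun c : ℝ => (1 - c) ^ (-(1/2) : ℝ)) volume 0 1 := by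
    have h := intervalIntegrable_rpow' (a := (1:ℝ)) (b := 0) (by norm_num : (-1:ℝ) < -(1/2))
    simpa using h.comp_sub_left 1
  have hInt : IntervalIntegrable (Jf l) volume 0 1 := by
    apply hmaj.mono_fun
    · have hcont : ContinuousOn (Jf l) (Ioo (0:ℝ) 1) :=
        (Jf_contOn l hl).mono (Ioo_subset_Ioo (by norm_num) le_rfl)
      have h1 : volume.restrict (Set.uIoc (0:ℝ) 1) = volume.restrict (Ioo (0:ℝ) 1) := by
        rw [uIoc_of_le zero_le_one]
        exact (Measure.restrict_congr_set Ioo_ae_eq_Ioc).symm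
      rw [h1]
      exact hcont.aestronglyMeasurable measurableSet_Ioo
    · rw [Filter.EventuallyLE, ae_restrict_iff' measurableSet_uIoc]
      apply Filter.Eventually.of_forall
      intro x hx
      rw [uIoc_of_le zero_le_one] at hx
      obtain ⟨hx0, hx1⟩ := hx
      simp only [Real.norm_eq_abs]
      rcases eq_or_lt_of_le hx1 with rfl | hlt
      · simp [Jf, Real.zero_rpow (by norm_num : (-(1/2) : ℝ) ≠ 0)]
      · have hb1 : (0:ℝ) < 1 - x := by linarith
        have hpow : x ^ (2*l) ≤ x := by
          calc x ^ (2*l) ≤ x ^ 1 := pow_le_pow_of_le_one hx0.le hlt.le (by omega)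
            _ = x := pow_one x
        have hb2 : (0:ℝ) < 1 - x ^ (2*l) := by linarith
        have hle : (1 - x ^ (2*l)) ^ (-(1/2):ℝ) ≤ (1 - x) ^ (-(1/2):ℝ) := by
          rw [Real.rpow_neg hb2.le, Real.rpow_neg hb1.le]
          apply inv_anti₀ (Real.rpow_pos_of_pos hb1 _)
          exact Real.rpow_le_rpow hb1.le (by linarith) (by norm_num)
        rw [show Jf l x = (1 - x ^ (2*l)) ^ (-(1/2):ℝ) from rfl,
          abs_of_nonneg (Real.rpow_nonneg hb2.le _), abs_of_nonneg (Real.rpow_nonneg hb1.le _)]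
        exact hle
  rw [intervalIntegrable_iff_integrableOn_Ioc_of_le zero_le_one] at hInt
  exact hInt


lemma subst_key (l : ℕ) (hl : 1 ≤ l) (c : ℝ) (hc0 : 0 < c) :
    (c ^ (2*l) : ℝ) ^ (1/(2*(l:ℝ)) - 1) * ((2*l : ℝ) * c ^ (2*l - 1)) = (2*l : ℝ) := by
  have hl0 : (0:ℝ) < 2*(l:ℝ) := by positivity
  have h1 : (c ^ (2*l) : ℝ) = c ^ ((2*l : ℕ) : ℝ) := (Real.rpow_natCast c (2*l)).symm
  have h2 : (c ^ ((2*l : ℕ) : ℝ)) ^ (1/(2*(l:ℝ)) - 1) = c ^ (((2*l : ℕ) : ℝ) * (1/(2*(l:ℝ)) - 1)) :=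
    (Real.rpow_mul hc0.le _ _).symm
  have h3 : ((2*l : ℕ) : ℝ) * (1/(2*(l:ℝ)) - 1) = 1 - 2*(l:ℝ) := by
    push_cast
    field_simp
  have h4 : (c ^ (2*l - 1) : ℝ) = c ^ (((2*l - 1 : ℕ)) : ℝ) := (Real.rpow_natCast c _).symm
  have h5 : (((2*l - 1 : ℕ)) : ℝ) = 2*(l:ℝ) - 1 := by
    have : (1:ℕ) ≤ 2*l := by omega
    push_cast [Nat.cast_sub this]
    ring
  rw [h1, h2, h3, h4, h5, ← mul_assoc, mul_comm (c ^ (1 - 2*(l:ℝ))) (2*(l:ℝ)), mul_assoc,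
    ← Real.rpow_add hc0]
  norm_num

lemma subst_eval (l : ℕ) (hl : 1 ≤ l) :
    ∫ c in (0:ℝ)..1, Jf l c =
      (1/(2*(l:ℝ))) * ∫ t in (0:ℝ)..1, t ^ (1/(2*(l:ℝ)) - 1) * (1 - t) ^ ((1/2 : ℝ) - 1) := by
  have hl0 : (0:ℝ) < 2*(l:ℝ) := by positivity
  set u : ℝ := 1/(2*(l:ℝ)) with hu
  set gB : ℝ → ℝ := fun t => t ^ (u - 1) * (1 - t) ^ ((1/2 : ℝ) - 1) with hgB
  set f : ℝ → ℝ := fun c => c ^ (2*l) with hf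
  set f' : ℝ → ℝ := fun c => (2*l : ℝ) * c ^ (2*l - 1) with hf'
  have himg1 : ∀ c ∈ Ioo (0:ℝ) 1, f c ∈ Ioo (0:ℝ) 1 := by
    intro c hc
    exact ⟨pow_pos hc.1 _, pow_lt_one₀ hc.1.le hc.2 (by omega)⟩
  have himg2 : ∀ c ∈ Icc (0:ℝ) 1, f c ∈ Icc (0:ℝ) 1 := by
    intro c hc
    exact ⟨pow_nonneg hc.1 _, pow_le_one₀ hc.1 hc.2⟩
  have key : ∫ c in (0:ℝ)..1, (gB ∘ f) c * f' c = ∫ t in (f 0)..(f 1), gB t := by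
    apply intervalIntegral.integral_comp_mul_deriv'''
    · exact (continuous_pow (2*l)).continuousOn
    · intro x hx
      have := (hasDerivAt_pow (2*l) x).hasDerivWithinAt (s := Ioi x)
      simpa [hf, hf', mul_comm] using this
    · -- continuity of gB on f '' Ioo
      rw [min_eq_left zero_le_one, max_eq_right zero_le_one]
      apply ContinuousOn.mono _ (by
        rintro _ ⟨c, hc, rfl⟩
        exact himg1 c hc)
      intro t ht
      apply ContinuousAt.continuousWithinAt
      have c1 : ContinuousAt (fun t : ℝ => t ^ (u - 1)) t :=
        Real.continuousAt_rpow_const _ _ (Or.inl ht.1.ne')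
      have c2 : ContinuousAt (fun t : ℝ => (1 - t) ^ ((1/2 : ℝ) - 1)) t := by
        have hb : (1 - t) ≠ 0 := by have := ht.2; intro h; linarith [sub_eq_zero.mp h]
        exact ContinuousAt.comp (x := t) (g := fun y : ℝ => y ^ ((1/2:ℝ) - 1))
          (Real.continuousAt_rpow_const _ _ (Or.inl hb)) (by fun_prop)
      exact c1.mul c2
    · apply IntegrableOn.mono_set (betaIntegrand_integrableOn u (1/2) (by positivity) (by norm_num))
      rintro _ ⟨c, hc, rfl⟩
      rw [uIcc_of_le zero_le_one] at hc
      exact himg2 c hc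
    · rw [uIcc_of_le zero_le_one, integrableOn_Icc_iff_integrableOn_Ioc]
      have h2 : IntegrableOn (fun c => (2*(l:ℝ)) * Jf l c) (Ioc (0:ℝ) 1) :=
        ((Jf_integrableOn l hl).mono_set Ioc_subset_Icc_self).const_mul _
      apply h2.congr_fun _ measurableSet_Ioc
      intro c hc
      have hkey := subst_key l hl c hc.1
      calc (2*(l:ℝ)) * Jf l c = Jf l c * ((c ^ (2*l) : ℝ) ^ (u - 1) * ((2*l : ℝ) * c ^ (2*l - 1))) := by
            rw [hkey]; push_cast; ring
        _ = (gB ∘ f) c * f' c := by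
            simp only [hgB, hf, hf', Function.comp_apply, Jf]
            push_cast
            ring_nf
  have hends : f 0 = 0 ∧ f 1 = 1 := by constructor <;> simp [hf, pow_eq_zero_iff] <;> omega
  rw [hends.1, hends.2] at key
  have hcongr : ∫ c in (0:ℝ)..1, (gB ∘ f) c * f' c = (2*(l:ℝ)) * ∫ c in (0:ℝ)..1, Jf l c := by
    rw [← intervalIntegral.integral_const_mul]
    apply intervalIntegral.integral_congr_ae
    apply Filter.Eventually.of_forall
    intro c hc
    rw [uIoc_of_le zero_le_one] at hc
    have hkey := subst_key l hl c hc.1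
    calc (gB ∘ f) c * f' c = Jf l c * ((c ^ (2*l) : ℝ) ^ (u - 1) * ((2*l : ℝ) * c ^ (2*l - 1))) := by
          simp only [hgB, hf, hf', Function.comp_apply, Jf]
          push_cast
          ring_nf
      _ = (2*(l:ℝ)) * Jf l c := by rw [hkey]; push_cast; ring
  rw [hcongr] at key
  rw [hu]
  field_simp
  linarith [key]

variable (l : ℕ) (hl : 2 ≤ l) (Cs Sn : ℝ → ℝ)
    (hCs : ∀ θ : ℝ, HasDerivAt Cs (-(Sn θ)) θ)
    (hSn : ∀ θ : ℝ, HasDerivAt Sn (Cs θ ^ (2 * l - 1)) θ)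
    (hCs0 : Cs 0 = 1) (hSn0 : Sn 0 = 0)

include hl hCs hSn hCs0 hSn0 in
lemma energy : ∀ θ : ℝ, (l : ℝ) * Sn θ ^ 2 + Cs θ ^ (2 * l) = 1 := by
  intro θ
  set E : ℝ → ℝ := fun θ => (l : ℝ) * Sn θ ^ 2 + Cs θ ^ (2 * l) with hE
  have hderiv : ∀ x : ℝ, HasDerivAt E 0 x := by
    intro x
    have h1 : HasDerivAt (fun θ => Sn θ ^ 2) (2 * Sn x ^ 1 * Cs x ^ (2*l-1)) x := by
      exact ((hSn x).pow 2 : HasDerivAt (fun θ => Sn θ ^ 2) _ x).congr_deriv (by norm_num)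
    have h2 : HasDerivAt (fun θ => Cs θ ^ (2*l)) ((2*l : ℕ) * Cs x ^ (2*l-1) * (-(Sn x))) x := by
      exact ((hCs x).pow (2*l) : HasDerivAt (fun θ => Cs θ ^ (2*l)) _ x)
    have : HasDerivAt E _ x := (h1.const_mul (l : ℝ)).add h2
    convert this using 1
    push_cast
    ring
  have hconst : E θ = E 0 :=
    is_const_of_deriv_eq_zero (fun x => (hderiv x).differentiableAt)
      (fun x => (hderiv x).deriv) θ 0
  have h0 : E 0 = 1 := by simp [hE, hCs0, hSn0]
  calc (l : ℝ) * Sn θ ^ 2 + Cs θ ^ (2 * l) = E θ := rfl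
    _ = E 0 := hconst
    _ = 1 := h0

include hl hCs hSn hCs0 hSn0 in
lemma cs_abs_le : ∀ θ : ℝ, |Cs θ| ≤ 1 := by
  intro θ
  have hE := energy l hl Cs Sn hCs hSn hCs0 hSn0 θ
  have h2l : 2 * l ≠ 0 := by omega
  have : |Cs θ| ^ (2*l) ≤ 1 := by
    have hsq : 0 ≤ (l : ℝ) * Sn θ ^ 2 := by positivity
    have hle : Cs θ ^ (2*l) ≤ 1 := by linarith
    calc |Cs θ| ^ (2*l) = |Cs θ ^ (2*l)| := (abs_pow _ _).symm
      _ = Cs θ ^ (2*l) := by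
          apply abs_of_nonneg
          have h : Cs θ ^ (2*l) = (Cs θ ^ l) ^ 2 := by rw [← pow_mul]; ring_nf
          rw [h]; positivity
      _ ≤ 1 := hle
  exact (pow_le_one_iff_of_nonneg (abs_nonneg _) h2l).mp this

include hl hCs hSn hCs0 hSn0 in
lemma sn_abs_le : ∀ θ : ℝ, |Sn θ| ≤ 1 := by
  intro θ
  have hE := energy l hl Cs Sn hCs hSn hCs0 hSn0 θ
  have hl1 : (1 : ℝ) ≤ (l : ℝ) := by exact_mod_cast hl.trans' (by norm_num)
  have hnonneg : 0 ≤ Cs θ ^ (2*l) := by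
    have : Cs θ ^ (2*l) = (Cs θ ^ l) ^ 2 := by rw [← pow_mul]; ring_nf
    rw [this]; positivity
  have hsq : Sn θ ^ 2 ≤ 1 := by nlinarith [sq_nonneg (Sn θ)]
  have h : |Sn θ| ^ 2 ≤ 1 ^ 2 := by rw [sq_abs]; simpa using hsq
  exact (pow_le_pow_iff_left₀ (abs_nonneg _) zero_le_one two_ne_zero).mp h


include hl hCs hSn hCs0 hSn0 in
lemma exists_first_zero : ∃ T : ℝ, 0 < T ∧ Cs T = 0 ∧ ∀ θ ∈ Ico (0:ℝ) T, 0 < Cs θ := by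
  have hContCs : Continuous Cs := by
    have : Differentiable ℝ Cs := fun x => (hCs x).differentiableAt
    exact this.continuous
  have hContSn : Continuous Sn := by
    have : Differentiable ℝ Sn := fun x => (hSn x).differentiableAt
    exact this.continuous
  -- Step 1: Cs is eventually nonpositive
  have hb : ∃ b : ℝ, 0 < b ∧ Cs b ≤ 0 := by
    by_contra hcon
    push_neg at hcon
    have hpos : ∀ θ : ℝ, 0 < θ → 0 < Cs θ := fun θ hθ => hcon θ hθ
    -- Sn strictly increasing on [0, ∞)
    have hSnMono : ∀ x y : ℝ, 0 ≤ x → x < y → Sn x < Sn y := by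
      intro x y hx hxy
      have : StrictMonoOn Sn (Icc 0 y) := by
        apply strictMonoOn_of_deriv_pos (convex_Icc 0 y) hContSn.continuousOn
        intro z hz
        rw [interior_Icc] at hz
        rw [(hSn z).deriv]
        exact pow_pos (hpos z hz.1) _
      exact this ⟨hx, by linarith⟩ ⟨by linarith, le_refl y⟩ hxy
    set ε := Sn 1 with hε
    have hεpos : 0 < ε := by
      have := hSnMono 0 1 le_rfl one_pos
      rw [hSn0] at this; exact this
    have hSnge : ∀ θ : ℝ, 1 ≤ θ → ε ≤ Sn θ := by
      intro θ hθ
      rcases eq_or_lt_of_le hθ with rfl | h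
      · exact le_rfl
      · exact (hSnMono 1 θ zero_le_one h).le
    -- A := Cs + ε·θ is antitone on [1, ∞)
    set A : ℝ → ℝ := fun θ => Cs θ + ε * θ with hA
    have hAanti : AntitoneOn A (Ici 1) := by
      apply antitoneOn_of_deriv_nonpos (convex_Ici 1)
        (hContCs.add (continuous_const.mul continuous_id)).continuousOn
      · intro z hz
        exact ((hCs z).add ((hasDerivAt_id z).const_mul ε)).differentiableAt.differentiableWithinAt
      · intro z hz
        rw [interior_Ici] at hz
        rw [(show HasDerivAt (Cs + (fun x => Sn 1) * id) (-(Sn z) + ε * 1) z from (hCs z).add ((hasDerivAt_id z).const_mul ε)).deriv]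
        have := hSnge z hz.le
        simp only [mul_one]
        linarith
    set b := 1 + (Cs 1 + 1) / ε with hbdef
    have hb1 : 1 ≤ b := by
      rw [hbdef]
      have : 0 ≤ (Cs 1 + 1) / ε := div_nonneg (by nlinarith [hpos 1 one_pos]) hεpos.le
      linarith
    have := hAanti (mem_Ici.mpr le_rfl) (mem_Ici.mpr hb1) hb1
    have hCb : Cs b ≤ Cs 1 + ε - ε * b := by simp only [hA] at this; linarith
    have : ε * b = ε + (Cs 1 + 1) := by
      rw [hbdef]; field_simp
    have : Cs b ≤ -1 := by linarith
    have := hpos b (by linarith)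
    linarith
  obtain ⟨b, hbpos, hCsb⟩ := hb
  -- Step 2: IVT gives a zero
  have hzero : ∃ z ∈ Icc 0 b, Cs z = 0 := by
    have := intermediate_value_Icc' hbpos.le hContCs.continuousOn
    have h0mem : (0:ℝ) ∈ Icc (Cs b) (Cs 0) := by
      rw [hCs0]; exact ⟨hCsb, zero_le_one⟩
    obtain ⟨z, hz, hz0⟩ := this h0mem
    exact ⟨z, hz, hz0⟩
  obtain ⟨z, hz, hz0⟩ := hzero
  set Z : Set ℝ := {θ | 0 ≤ θ ∧ Cs θ = 0} with hZ
  have hZclosed : IsClosed Z := by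
    have : Z = Ici 0 ∩ Cs ⁻¹' {0} := by ext x; simp [hZ, mem_Ici]
    rw [this]
    exact isClosed_Ici.inter (isClosed_singleton.preimage hContCs)
  have hZne : Z.Nonempty := ⟨z, hz.1, hz0⟩
  have hZbdd : BddBelow Z := ⟨0, fun x hx => hx.1⟩
  set T := sInf Z with hT
  have hTmem : T ∈ Z := hZclosed.csInf_mem hZne hZbdd
  have hCsT : Cs T = 0 := hTmem.2
  have hTpos : 0 < T := by
    rcases eq_or_lt_of_le hTmem.1 with h | h
    · exfalso; rw [← h] at hCsT; rw [hCs0] at hCsT; norm_num at hCsT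
    · exact h
  refine ⟨T, hTpos, hCsT, ?_⟩
  intro θ hθ
  by_contra hneg
  push_neg at hneg
  rcases eq_or_lt_of_le hneg with h | h
  · have : θ ∈ Z := ⟨hθ.1, h⟩
    have := csInf_le hZbdd this
    rw [← hT] at this
    linarith [hθ.2]
  · -- Cs θ < 0, IVT on [0, θ]
    have hivt := intermediate_value_Icc' hθ.1 hContCs.continuousOn
    have h0mem : (0:ℝ) ∈ Icc (Cs θ) (Cs 0) := by rw [hCs0]; exact ⟨h.le, zero_le_one⟩
    obtain ⟨w, hw, hw0⟩ := hivt h0mem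
    have : w ∈ Z := ⟨hw.1, hw0⟩
    have := csInf_le hZbdd this
    rw [← hT] at this
    linarith [hθ.2, hw.2]



include hl hCs hSn hCs0 hSn0 in
lemma time_eq (T : ℝ) (hT : 0 < T) (hCsT : Cs T = 0) (hpos : ∀ θ ∈ Ico (0:ℝ) T, 0 < Cs θ) :
    T = Real.sqrt l * ∫ c in (0:ℝ)..1, Jf l c := by
  have hl1 : (1:ℕ) ≤ l := by omega
  have hContCs : Continuous Cs := Differentiable.continuous (fun x => (hCs x).differentiableAt)
  have hContSn : Continuous Sn := Differentiable.continuous (fun x => (hSn x).differentiableAt)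
  have hE := energy l hl Cs Sn hCs hSn hCs0 hSn0
  have hCsle := cs_abs_le l hl Cs Sn hCs hSn hCs0 hSn0
  -- Sn positive on (0, T]
  have hSnMono : StrictMonoOn Sn (Icc 0 T) := by
    apply strictMonoOn_of_deriv_pos (convex_Icc 0 T) hContSn.continuousOn
    intro z hz
    rw [interior_Icc] at hz
    rw [(hSn z).deriv]
    exact pow_pos (hpos z ⟨hz.1.le, hz.2⟩) _
  have hSnpos : ∀ θ ∈ Ioc (0:ℝ) T, 0 < Sn θ := by
    intro θ hθ
    have := hSnMono (left_mem_Icc.mpr hT.le) ⟨hθ.1.le, hθ.2⟩ hθ.1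
    rw [hSn0] at this
    exact this
  -- Cs strictly decreasing on [0,T]
  have hCsAnti : StrictAntiOn Cs (Icc 0 T) := by
    apply strictAntiOn_of_deriv_neg (convex_Icc 0 T) hContCs.continuousOn
    intro z hz
    rw [interior_Icc] at hz
    rw [(hCs z).deriv]
    have := hSnpos z ⟨hz.1, hz.2.le⟩
    linarith
  set g : ℝ → ℝ := fun c => Real.sqrt l * Jf l c with hg
  have hgInt : IntegrableOn g (Icc (0:ℝ) 1) := (Jf_integrableOn l hl1).const_mul _
  set G : ℝ → ℝ := fun x => ∫ c in x..1, g c with hG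
  have hab : IntervalIntegrable g volume 0 1 := by
    apply IntegrableOn.intervalIntegrable
    rwa [uIcc_of_le zero_le_one]
  have hGcont : ContinuousOn G (Icc 0 1) := by
    have h1 : ContinuousOn (fun x => ∫ c in (0:ℝ)..x, g c) (Icc 0 1) := by
      have h := continuousOn_primitive_interval (a := (0:ℝ)) (b := 1) (f := g) (μ := volume)
        (by rwa [uIcc_of_le zero_le_one])
      rwa [uIcc_of_le zero_le_one] at h
    have h2 : EqOn G (fun x => (∫ c in (0:ℝ)..1, g c) - ∫ c in (0:ℝ)..x, g c) (Icc 0 1) := by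
      intro x hx
      have hac : IntervalIntegrable g volume 0 x := by
        apply IntegrableOn.intervalIntegrable
        rw [uIcc_of_le hx.1]
        exact hgInt.mono_set (Icc_subset_Icc le_rfl hx.2)
      have h3 := intervalIntegral.integral_interval_sub_left hab hac
      exact h3.symm
    exact ContinuousOn.congr (continuousOn_const.sub h1) h2
  set H : ℝ → ℝ := fun θ => G (Cs θ) with hH
  have hmaps : MapsTo Cs (Icc 0 T) (Icc 0 1) := by
    intro θ hθ
    constructor
    · rcases eq_or_lt_of_le hθ.2 with rfl | h
      · rw [hCsT]
      · exact (hpos θ ⟨hθ.1, h⟩).le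
    · have := hCsle θ
      exact (le_abs_self _).trans this
  have hHcont : ContinuousOn H (Icc 0 T) := hGcont.comp hContCs.continuousOn hmaps
  -- derivative of H is 1 on the interior
  have hHderiv : ∀ θ ∈ Ioo (0:ℝ) T, HasDerivAt H 1 θ := by
    intro θ hθ
    set x := Cs θ with hx
    have hx0 : 0 < x := hpos θ ⟨hθ.1.le, hθ.2⟩
    have hx1 : x < 1 := by
      have := hCsAnti (left_mem_Icc.mpr hT.le) ⟨hθ.1.le, hθ.2.le⟩ hθ.1
      rwa [hCs0] at this
    have hgcont : ContinuousOn g (Ioo (-1:ℝ) 1) := continuousOn_const.mul (Jf_contOn l hl1)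
    have hxmem : x ∈ Ioo (-1:ℝ) 1 := ⟨by linarith, hx1⟩
    have hGder : HasDerivAt G (-(g x)) x := by
      apply intervalIntegral.integral_hasDerivAt_left
      · apply IntegrableOn.intervalIntegrable
        rw [uIcc_of_le hx1.le]
        exact hgInt.mono_set (Icc_subset_Icc hx0.le le_rfl)
      · exact hgcont.stronglyMeasurableAtFilter isOpen_Ioo x hxmem
      · exact hgcont.continuousAt (isOpen_Ioo.mem_nhds hxmem)
    have hchain := HasDerivAt.comp θ hGder (hCs θ)
    have hval : -(g x) * -(Sn θ) = 1 := by
      have hSnθ : 0 < Sn θ := hSnpos θ ⟨hθ.1, hθ.2.le⟩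
      have hEθ := hE θ
      have hbase : 1 - x ^ (2*l) = (l:ℝ) * Sn θ ^ 2 := by rw [hx]; linarith
      have hsqrtl : (0:ℝ) < Real.sqrt l := Real.sqrt_pos.mpr (by positivity)
      have hJ : Jf l x = (Real.sqrt l * Sn θ)⁻¹ := by
        rw [show Jf l x = (1 - x ^ (2*l)) ^ (-(1/2):ℝ) from rfl, hbase]
        rw [Real.rpow_neg (by positivity), ← Real.sqrt_eq_rpow]
        rw [show ((l:ℝ) * Sn θ ^ 2) = (l:ℝ) * Sn θ ^ 2 from rfl]
        rw [Real.sqrt_mul (by positivity), Real.sqrt_sq hSnθ.le]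
      rw [hg]
      simp only
      rw [hJ]
      field_simp
    rw [hval] at hchain
    exact hchain
  -- H - id has zero derivative, hence constant
  have hkey : H T - T = H 0 - 0 := by
    set D : ℝ → ℝ := fun θ => H θ - θ with hD
    have hDcont : ContinuousOn D (Icc 0 T) := hHcont.sub continuousOn_id
    have hDdiff : ∀ θ ∈ interior (Icc (0:ℝ) T), HasDerivAt D 0 θ := by
      intro θ hθ
      rw [interior_Icc] at hθ
      exact ((hHderiv θ hθ).sub (hasDerivAt_id θ) : HasDerivAt D _ θ).congr_deriv (sub_self 1)
    have hmono : MonotoneOn D (Icc 0 T) := by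
      apply monotoneOn_of_deriv_nonneg (convex_Icc 0 T) hDcont
      · intro θ hθ
        exact (hDdiff θ hθ).differentiableAt.differentiableWithinAt
      · intro θ hθ
        rw [(hDdiff θ hθ).deriv]
    have hanti : AntitoneOn D (Icc 0 T) := by
      apply antitoneOn_of_deriv_nonpos (convex_Icc 0 T) hDcont
      · intro θ hθ
        exact (hDdiff θ hθ).differentiableAt.differentiableWithinAt
      · intro θ hθ
        rw [(hDdiff θ hθ).deriv]
    have h1 := hmono (left_mem_Icc.mpr hT.le) (right_mem_Icc.mpr hT.le) hT.le
    have h2 := hanti (left_mem_Icc.mpr hT.le) (right_mem_Icc.mpr hT.le) hT.le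
    have : D T = D 0 := le_antisymm h2 h1
    simpa [hD] using this
  have hH0 : H 0 = 0 := by
    have h1 : H 0 = G 1 := by rw [show H 0 = G (Cs 0) from rfl, hCs0]
    rw [h1, show G 1 = ∫ c in (1:ℝ)..1, g c from rfl, intervalIntegral.integral_same]
  have hHT : H T = Real.sqrt l * ∫ c in (0:ℝ)..1, Jf l c := by
    have h1 : H T = ∫ c in (0:ℝ)..1, Real.sqrt ↑l * Jf l c := by
      rw [show H T = G (Cs T) from rfl, hCsT]
    rw [h1, intervalIntegral.integral_const_mul]
  rw [hH0, hHT] at hkey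
  linarith


include hl hCs hSn hCs0 hSn0 in
lemma shift_symm (habsC : ∀ θ : ℝ, |Cs θ| ≤ 1) (habsS : ∀ θ : ℝ, |Sn θ| ≤ 1)
    (T : ℝ) (hCsT : Cs T = 0) :
    (∀ θ : ℝ, Cs (2*T - θ) = -Cs θ ∧ Sn (2*T - θ) = Sn θ) ∧
      (∀ θ : ℝ, Cs (θ + 2*T) = -Cs θ ∧ Sn (θ + 2*T) = -Sn θ) := by
  set n := 2*l - 1 with hn
  have hn1 : 1 ≤ n := by omega
  have hodd : Odd n := ⟨l - 1, by omega⟩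
  have hball : ∀ (a b : ℝ), |a| ≤ 1 → |b| ≤ 1 → (a, b) ∈ closedBall (0 : ℝ × ℝ) 1 := by
    intro a b ha hb
    rw [mem_closedBall_zero_iff, Prod.norm_def]
    simp only [Real.norm_eq_abs]
    exact max_le ha hb
  set F : ℝ → ℝ × ℝ := fun θ => (Cs θ, Sn θ) with hF
  have hFd : ∀ t, HasDerivAt F (-(F t).2, (F t).1 ^ n) t := fun t => (hCs t).prodMk (hSn t)
  have hFb : ∀ t, F t ∈ closedBall (0 : ℝ × ℝ) 1 := fun t => hball _ _ (habsC t) (habsS t)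
  -- reflection about T
  have hrefl : ∀ θ : ℝ, Cs (2*T - θ) = -Cs θ ∧ Sn (2*T - θ) = Sn θ := by
    set g : ℝ → ℝ × ℝ := fun θ => (-Cs (2*T - θ), Sn (2*T - θ)) with hg
    have hgd : ∀ t, HasDerivAt g (-(g t).2, (g t).1 ^ n) t := by
      intro t
      have hinner : HasDerivAt (fun θ : ℝ => 2*T - θ) (-1) t := by
        simpa using (hasDerivAt_id t).const_sub (2*T)
      have c1 : HasDerivAt (fun θ => Cs (2*T - θ)) (-(Sn (2*T - t)) * (-1)) t :=
        (hCs (2*T - t)).comp t hinner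
      have c2 : HasDerivAt (fun θ => Sn (2*T - θ)) ((Cs (2*T - t)) ^ n * (-1)) t :=
        (hSn (2*T - t)).comp t hinner
      have c1' : HasDerivAt (fun θ => -Cs (2*T - θ)) (-(Sn (2*T - t))) t := by
        have : HasDerivAt (fun θ => -Cs (2*T - θ)) _ t := c1.neg
        simpa using this
      have c2' : HasDerivAt (fun θ => Sn (2*T - θ)) ((-Cs (2*T - t)) ^ n) t := by
        rw [hodd.neg_pow]
        simpa using c2
      exact c1'.prodMk c2'
    have hgb : ∀ t, g t ∈ closedBall (0 : ℝ × ℝ) 1 := by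
      intro t
      apply hball
      · rw [abs_neg]; exact habsC _
      · exact habsS _
    have heqT : F T = g T := by
      simp only [hF, hg, Prod.mk.injEq]
      constructor
      · rw [show 2*T - T = T by ring, hCsT, neg_zero]
      · rw [show 2*T - T = T by ring]
    have := ode_unique n hn1 F g hFd hgd hFb hgb T heqT
    intro θ
    have h := congrFun this θ
    simp only [hF, hg, Prod.mk.injEq] at h
    exact ⟨by linarith [h.1], h.2.symm⟩
  have hCs2T : Cs (2*T) = -1 := by
    have := (hrefl 0).1
    rw [sub_zero, hCs0] at this
    exact this
  have hSn2T : Sn (2*T) = 0 := by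
    have := (hrefl 0).2
    rw [sub_zero, hSn0] at this
    exact this
  -- shift by 2T
  set h : ℝ → ℝ × ℝ := fun θ => (-Cs (θ - 2*T), -Sn (θ - 2*T)) with hh
  have hhd : ∀ t, HasDerivAt h (-(h t).2, (h t).1 ^ n) t := by
    intro t
    have hinner : HasDerivAt (fun θ : ℝ => θ - 2*T) 1 t := by
      simpa using (hasDerivAt_id t).sub_const (2*T)
    have c1 : HasDerivAt (fun θ => Cs (θ - 2*T)) (-(Sn (t - 2*T)) * 1) t :=
      (hCs (t - 2*T)).comp t hinner
    have c2 : HasDerivAt (fun θ => Sn (θ - 2*T)) ((Cs (t - 2*T)) ^ n * 1) t :=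
      (hSn (t - 2*T)).comp t hinner
    have c1' : HasDerivAt (fun θ => -Cs (θ - 2*T)) (Sn (t - 2*T)) t := by
      have : HasDerivAt (fun θ => -Cs (θ - 2*T)) _ t := c1.neg
      simpa using this
    have c2' : HasDerivAt (fun θ => -Sn (θ - 2*T)) ((-Cs (t - 2*T)) ^ n) t := by
      rw [hodd.neg_pow]
      have : HasDerivAt (fun θ => -Sn (θ - 2*T)) _ t := c2.neg
      simpa using this
    have : HasDerivAt h (Sn (t - 2*T), (-Cs (t - 2*T)) ^ n) t := c1'.prodMk c2'
    simpa [hh] using this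
  have hhb : ∀ t, h t ∈ closedBall (0 : ℝ × ℝ) 1 := by
    intro t
    apply hball
    · rw [abs_neg]; exact habsC _
    · rw [abs_neg]; exact habsS _
  have heq2T : F (2*T) = h (2*T) := by
    simp only [hF, hh, Prod.mk.injEq]
    rw [sub_self, hCs0, hSn0, hCs2T, hSn2T]
    norm_num
  have huniq := ode_unique n hn1 F h hFd hhd hFb hhb (2*T) heq2T
  refine ⟨hrefl, ?_⟩
  intro θ
  have heval := congrFun huniq (θ + 2*T)
  simp only [hF, hh, Prod.mk.injEq, add_sub_cancel_right] at heval
  exact heval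


include hl hCs hSn hCs0 hSn0 in
theorem integral_SnCs_odd_eq_zero' (i j : ℕ) (hodd : Odd i ∨ Odd j) :
    ∫ θ in (0 : ℝ)..(Omega l), Sn θ ^ i * Cs θ ^ j = 0 := by
  have hl1 : (1:ℕ) ≤ l := by omega
  obtain ⟨T, hT, hCsT, hposT⟩ := exists_first_zero l hl Cs Sn hCs hSn hCs0 hSn0
  have habsC := cs_abs_le l hl Cs Sn hCs hSn hCs0 hSn0
  have habsS := sn_abs_le l hl Cs Sn hCs hSn hCs0 hSn0
  obtain ⟨hrefl, hshift⟩ := shift_symm l hl Cs Sn hCs hSn hCs0 hSn0 habsC habsS T hCsT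
  have hTval := time_eq l hl Cs Sn hCs hSn hCs0 hSn0 T hT hCsT hposT
  have hl0 : (0:ℝ) < (l:ℝ) := by positivity
  have hsq : (0:ℝ) < Real.sqrt l := Real.sqrt_pos.mpr hl0
  have hJval : ∫ c in (0:ℝ)..1, Jf l c =
      (1/(2*(l:ℝ))) * (Real.Gamma (1/(2*(l:ℝ))) * Real.Gamma (1/2) /
        Real.Gamma (1/(2*(l:ℝ)) + 1/2)) := by
    rw [subst_eval l hl1, betaReal (1/(2*(l:ℝ))) (1/2) (by positivity) (by norm_num)]
  have hOmega : Omega l = 2 * (2 * T) := by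
    rw [hTval, hJval, Omega]
    have h1 : ((l:ℝ)) ^ (-(1 / 2 : ℝ)) = (Real.sqrt l)⁻¹ := by
      rw [Real.rpow_neg hl0.le, Real.sqrt_eq_rpow]
    have h2 : Real.Gamma (1/2 + 1/(2*(l:ℝ))) = Real.Gamma (1/(2*(l:ℝ)) + 1/2) := by
      rw [add_comm]
    rw [h1, h2]
    have h3 : Real.sqrt l * Real.sqrt l = (l:ℝ) := Real.mul_self_sqrt hl0.le
    set s := Real.sqrt l with hs
    set A := Real.Gamma (1/2) with hA
    set B := Real.Gamma (1/(2*(l:ℝ))) with hB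
    set C := Real.Gamma (1/(2*(l:ℝ)) + 1/2) with hC
    rw [← h3]
    field_simp
  -- the symmetry argument
  set P := 2 * T with hP
  have hPpos : 0 < P := by positivity
  have hContCs : Continuous Cs := Differentiable.continuous (fun x => (hCs x).differentiableAt)
  have hContSn : Continuous Sn := Differentiable.continuous (fun x => (hSn x).differentiableAt)
  set f : ℝ → ℝ := fun θ => Sn θ ^ i * Cs θ ^ j with hf
  have hContf : Continuous f := (hContSn.pow i).mul (hContCs.pow j)
  have hI1 : IntervalIntegrable f volume 0 P := hContf.intervalIntegrable 0 P
  have hI2 : IntervalIntegrable f volume P (2*P) := hContf.intervalIntegrable P (2*P)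
  have hsplit : ∫ θ in (0:ℝ)..(2*P), f θ = (∫ θ in (0:ℝ)..P, f θ) + ∫ θ in P..(2*P), f θ :=
    (intervalIntegral.integral_add_adjacent_intervals hI1 hI2).symm
  have hshift' : ∀ θ : ℝ, f (θ + P) = (-1)^(i+j) * f θ := by
    intro θ
    have h := hshift θ
    simp only [hf]
    rw [h.1, h.2, neg_pow (Sn θ) i, neg_pow (Cs θ) j]
    ring
  have hsecond : ∫ θ in P..(2*P), f θ = (-1)^(i+j) * ∫ θ in (0:ℝ)..P, f θ := by
    have h := intervalIntegral.integral_comp_add_right (a := (0:ℝ)) (b := P) (d := P) f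
    rw [zero_add, show P + P = 2*P by ring] at h
    rw [← h]
    rw [← intervalIntegral.integral_const_mul]
    apply intervalIntegral.integral_congr
    intro θ hθ
    exact hshift' θ
  by_cases hj : Odd j
  · -- reflection kills the half-period integral
    have hreflf : ∀ θ : ℝ, f (P - θ) = - f θ := by
      intro θ
      have h := hrefl θ
      simp only [hf]
      rw [h.1, h.2, hj.neg_pow]
      ring
    have hfirst : ∫ θ in (0:ℝ)..P, f θ = - ∫ θ in (0:ℝ)..P, f θ := by
      have h := intervalIntegral.integral_comp_sub_left (a := (0:ℝ)) (b := P) f P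
      rw [sub_zero, sub_self] at h
      calc ∫ θ in (0:ℝ)..P, f θ = ∫ θ in (0:ℝ)..P, f (P - θ) := h.symm
        _ = ∫ θ in (0:ℝ)..P, - f θ := by
            apply intervalIntegral.integral_congr
            intro θ hθ
            exact hreflf θ
        _ = - ∫ θ in (0:ℝ)..P, f θ := intervalIntegral.integral_neg
    have hzero : ∫ θ in (0:ℝ)..P, f θ = 0 := by linarith
    rw [hOmega, hsplit, hsecond, hzero]
    ring
  · have hi : Odd i := hodd.resolve_right hj
    have hij : Odd (i + j) := hi.add_even (Nat.not_odd_iff_even.mp hj)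
    rw [hOmega, hsplit, hsecond, hij.neg_one_pow]
    ring

end AuxLemmas

/-- Lemma 2.1 (v): if i or j is odd then ∫_0^Ω Sn^i · Cs^j dθ = 0. -/
theorem integral_SnCs_odd_eq_zero (l : ℕ) (hl : 2 ≤ l) (Cs Sn : ℝ → ℝ)
    (hCs : ∀ θ : ℝ, HasDerivAt Cs (-(Sn θ)) θ)
    (hSn : ∀ θ : ℝ, HasDerivAt Sn (Cs θ ^ (2 * l - 1)) θ)
    (hCs0 : Cs 0 = 1) (hSn0 : Sn 0 = 0)
    (i j : ℕ) (hodd : Odd i ∨ Odd j) :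
    ∫ θ in (0 : ℝ)..(Omega l), Sn θ ^ i * Cs θ ^ j = 0 :=
  integral_SnCs_odd_eq_zero' l hl Cs Sn hCs hSn hCs0 hSn0 i j hodd
end
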